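/- arXiv:math/0304380 — 2 statements merged into one kernel-verified Lean document; each statement's English description precedes it below -/
import Mathlib

section
/- Let g be the sum of the coefficients of the short simple roots in θ = Σᵢ cᵢαᵢ, and let f be the index of connection of Δ. If g + 1 and f are relatively prime, then there is an element of the affine Weyl group Ŵ that maps the simplex D^(s)_min = {x ∈ V : (x,α) ≥ −1 for α ∈ Π_s, (x,α) ≥ 0 for α ∈ Π_l, (x,θ) ≤ 1} onto the dilated closed fundamental alcove (g+1)·closure(A) = {x ∈ V : (x,α) ≥ 0 for all α ∈ Π, (x,θ) ≤ g+1}. -/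
open scoped RealInnerProductSpace
open Module

noncomputable section

variable {V : Type*} [NormedAddCommGroup V] [InnerProductSpace ℝ V]

/-- The underlying function of the orthogonal reflection in the hyperplane
orthogonal to `α` (the identity if `α = 0`). -/
def reflFun (α : V) (x : V) : V := x - (2 * ⟪α, x⟫ / ⟪α, α⟫) • α

lemma reflFun_involutive (α : V) : Function.Involutive (reflFun α) := by
  intro x
  by_cases h : α = 0
  · simp [reflFun, h]
  · have hs : ⟪α, α⟫ ≠ 0 := inner_self_ne_zero.mpr h
    have h1 : ⟪α, x - (2 * ⟪α, x⟫ / ⟪α, α⟫) • α⟫ = -⟪α, x⟫ := by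
      rw [inner_sub_right, real_inner_smul_right]
      field_simp
      ring
    simp only [reflFun]
    rw [h1, show 2 * -⟪α, x⟫ / ⟪α, α⟫ = -(2 * ⟪α, x⟫ / ⟪α, α⟫) by ring,
      neg_smul, sub_neg_eq_add]
    abel

/-- The orthogonal reflection in the hyperplane orthogonal to `α`, as a linear
equivalence (the identity if `α = 0`). -/
def sRefl (α : V) : V ≃ₗ[ℝ] V where
  toFun := reflFun α
  map_add' x y := by
    simp only [reflFun, inner_add_right]
    rw [show 2 * (⟪α, x⟫ + ⟪α, y⟫) / ⟪α, α⟫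
        = 2 * ⟪α, x⟫ / ⟪α, α⟫ + 2 * ⟪α, y⟫ / ⟪α, α⟫ by ring, add_smul]
    abel
  map_smul' c x := by
    simp only [reflFun, real_inner_smul_right, RingHom.id_apply, smul_sub, smul_smul]
    congr 2
    ring
  invFun := reflFun α
  left_inv := reflFun_involutive α
  right_inv := reflFun_involutive α

/-- The coroot `α∨ = 2α/(α,α)` of a vector `α`. -/
def corootVec (α : V) : V := (2 / ⟪α, α⟫) • α

/-- The (affine) hyperplane `{x | (x, μ) = k}`. -/
def rootHyperplane (μ : V) (k : ℝ) : Set V := {x : V | ⟪x, μ⟫ = k}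

/-- `R` is a region of the hyperplane arrangement whose hyperplanes are encoded by the
pairs `(μ, k) ∈ A` (the hyperplane `{x | (x,μ) = k}`): a connected component of the
complement of the union of the hyperplanes. -/
def IsRegionOf (A : Set (V × ℝ)) (R : Set V) : Prop :=
  ∃ x ∈ (⋃ h ∈ A, rootHyperplane h.1 h.2)ᶜ,
    R = connectedComponentIn (⋃ h ∈ A, rootHyperplane h.1 h.2)ᶜ x

open Classical in
/-- The characteristic polynomial of the hyperplane arrangement encoded by
`A : Set (V × ℝ)` in an ambient space of dimension `p`, evaluated at `t`, via
Whitney's theorem: `χ(A,t) = ∑ (-1)^{#S} t^{dim ∩ S}`, the sum being over all central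
subarrangements `S ⊆ A` (junk value `0` if `A` is infinite). -/
noncomputable def charPolyEval (p : ℕ) (A : Set (V × ℝ)) (t : ℝ) : ℝ :=
  if hA : A.Finite then
    ∑ S ∈ hA.toFinset.powerset,
      if (⋂ h ∈ (S : Set (V × ℝ)), rootHyperplane h.1 h.2).Nonempty then
        (-1 : ℝ) ^ S.card *
          t ^ (p - Module.finrank ℝ (Submodule.span ℝ (Prod.fst '' (S : Set (V × ℝ)))))
      else 0
  else 0

/-- The linear action of `w = v·t_r ∈ Ŵ` on `V ⊕ ℝδ`:
`w(μ + kδ) = v(μ) + (k - (μ,r))δ`. -/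
def affAct (v : V ≃ₗ[ℝ] V) (r : V) (β : V × ℝ) : V × ℝ :=
  (v β.1, β.2 - ⟪β.1, r⟫)

/-- The linear action of `w⁻¹` on `V ⊕ ℝδ`, for `w = v·t_r ∈ Ŵ`:
`w⁻¹(μ + kδ) = v⁻¹(μ) + (k + (v⁻¹μ, r))δ`. -/
def affActInv (v : V ≃ₗ[ℝ] V) (r : V) (β : V × ℝ) : V × ℝ :=
  (v.symm β.1, β.2 + ⟪v.symm β.1, r⟫)

/-- The affine `∗`-action of `w = v·t_r ∈ Ŵ` on `V`: `w ∗ x = v(x + r)`. -/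
def affStar (v : V ≃ₗ[ℝ] V) (r : V) (x : V) : V := v (x + r)

/-- The affine `∗`-action of `w⁻¹` on `V`, for `w = v·t_r ∈ Ŵ`: `w⁻¹ ∗ x = v⁻¹(x) - r`. -/
def affStarInv (v : V ≃ₗ[ℝ] V) (r : V) (x : V) : V := v.symm x - r

/-- An irreducible reduced crystallographic root system `Δ` of rank `p`, spanning a real
inner product space `V`, together with a choice of positive system `Δ⁺ = pos`, simple
roots `α₁, …, α_p`, and the highest root `θ`. -/
structure RootSystemData (V : Type*) [NormedAddCommGroup V] [InnerProductSpace ℝ V]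
    (p : ℕ) where
  /-- the set of roots -/
  Δ : Set V
  finite : Δ.Finite
  zero_notMem : (0 : V) ∉ Δ
  span_eq_top : Submodule.span ℝ Δ = ⊤
  finrank_eq : Module.finrank ℝ V = p
  neg_mem : ∀ α ∈ Δ, -α ∈ Δ
  /-- reduced: the only multiples of a root that are roots are `±α` -/
  reduced : ∀ α ∈ Δ, ∀ c : ℝ, c • α ∈ Δ → c = 1 ∨ c = -1
  /-- crystallographic: Cartan integers -/
  crystallographic : ∀ α ∈ Δ, ∀ β ∈ Δ, ∃ n : ℤ, 2 * ⟪α, β⟫ / ⟪α, α⟫ = (n : ℝ)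
  reflect_mem : ∀ α ∈ Δ, ∀ β ∈ Δ, sRefl α β ∈ Δ
  /-- irreducible: no splitting into two orthogonal parts -/
  irred : ∀ S T : Set V, Δ = S ∪ T → (∀ a ∈ S, ∀ b ∈ T, ⟪a, b⟫ = 0) → S = ∅ ∨ T = ∅
  /-- the simple roots `α₁, …, α_p` -/
  simpleRoot : Fin p → V
  simpleRoot_mem : ∀ i, simpleRoot i ∈ Δ
  simpleRoot_indep : LinearIndependent ℝ simpleRoot
  /-- the positive roots `Δ⁺` -/
  pos : Set V
  pos_def : pos = {α ∈ Δ | ∃ c : Fin p → ℕ, α = ∑ i, (c i : ℝ) • simpleRoot i}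
  pos_or_neg : ∀ α ∈ Δ, α ∈ pos ∨ -α ∈ pos
  /-- the highest root -/
  θ : V
  θ_mem : θ ∈ pos
  θ_highest : ∀ α ∈ pos, ∃ c : Fin p → ℕ, θ = α + ∑ i, (c i : ℝ) • simpleRoot i

namespace RootSystemData

variable {p : ℕ} (RS : RootSystemData V p)

/-- The coroot lattice `Q∨`, generated by the coroots of the roots. -/
def corootLattice : AddSubgroup V := AddSubgroup.closure (corootVec '' RS.Δ)

/-- The coweight lattice `P∨ = {x | (x, α) ∈ ℤ for all roots α}`. -/
def coweightLattice : AddSubgroup V where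
  carrier := {x : V | ∀ α ∈ RS.Δ, ∃ n : ℤ, ⟪x, α⟫ = (n : ℝ)}
  zero_mem' := fun α _ => ⟨0, by simp⟩
  add_mem' := by
    intro x y hx hy α hα
    obtain ⟨n, hn⟩ := hx α hα
    obtain ⟨m, hm⟩ := hy α hα
    exact ⟨n + m, by rw [inner_add_left, hn, hm]; push_cast; ring⟩
  neg_mem' := by
    intro x hx α hα
    obtain ⟨n, hn⟩ := hx α hα
    exact ⟨-n, by rw [inner_neg_left, hn]; push_cast; ring⟩

/-- The index of connection `f = [P∨ : Q∨]`. -/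
noncomputable def indexOfConnection : ℕ :=
  RS.corootLattice.relIndex RS.coweightLattice

/-- The Weyl group `W`, generated by the reflections in the roots. -/
def weylGroup : Subgroup (V ≃ₗ[ℝ] V) :=
  Subgroup.closure {w : V ≃ₗ[ℝ] V | ∃ α ∈ RS.Δ, w = sRefl α}

/-- The partial order `μ ≼ γ` on roots: `γ - μ` is a nonnegative integer combination of
the simple roots. -/
def rootLe (μ γ : V) : Prop :=
  ∃ c : Fin p → ℕ, γ = μ + ∑ i, (c i : ℝ) • RS.simpleRoot i

/-- An ideal of `Δ⁺`. -/
def IsIdeal (I : Set V) : Prop :=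
  I ⊆ RS.pos ∧ ∀ γ ∈ I, ∀ μ ∈ RS.pos, γ + μ ∈ RS.Δ → γ + μ ∈ I

/-- An antichain in the poset `(Δ⁺, ≼)`. -/
def IsRootAntichain (Γ : Set V) : Prop :=
  Γ ⊆ RS.pos ∧ ∀ μ ∈ Γ, ∀ γ ∈ Γ, RS.rootLe μ γ → μ = γ

/-- The set of minimal elements (generators, for an ideal) of a subset of `Δ⁺`. -/
def gens (I : Set V) : Set V := {γ ∈ I | ∀ μ ∈ I, RS.rootLe μ γ → μ = γ}

/-- The ideal `I⟨Γ⟩` generated by an antichain `Γ`. -/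
def idealGen (Γ : Set V) : Set V := {μ ∈ RS.pos | ∃ γ ∈ Γ, RS.rootLe γ μ}

/-- The set `Ξ(I)` of maximal elements of `Δ⁺ \ I`. -/
def XiSet (I : Set V) : Set V :=
  {γ ∈ RS.pos \ I | ∀ μ ∈ RS.pos \ I, RS.rootLe γ μ → γ = μ}

/-- `k(μ, I)`: the minimal number of summands in an expression of `μ` as a sum of
positive roots not in `I`. -/
noncomputable def kNum (I : Set V) (μ : V) : ℕ :=
  sInf {n : ℕ | ∃ f : Fin n → V, (∀ i, f i ∈ RS.pos \ I) ∧ μ = ∑ i, f i}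

/-- A root is short if it is strictly shorter than the highest root `θ`. -/
def IsShort (α : V) : Prop := α ∈ RS.Δ ∧ ⟪α, α⟫ < ⟪RS.θ, RS.θ⟫

/-- The short positive roots `Δ⁺_s`. -/
def shortPos : Set V := {α ∈ RS.pos | ⟪α, α⟫ < ⟪RS.θ, RS.θ⟫}

/-- The long positive roots `Δ⁺_l`. -/
def longPos : Set V := {α ∈ RS.pos | ⟪α, α⟫ = ⟪RS.θ, RS.θ⟫}

/-- `Δ` has roots of exactly two lengths, the squared length ratio (long over short)
being `ratio`. -/
def LengthRatio (ratio : ℝ) : Prop :=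
  ∃ ls : ℝ, 0 < ls ∧ ls < ⟪RS.θ, RS.θ⟫ ∧
    (∀ α ∈ RS.Δ, ⟪α, α⟫ = ls ∨ ⟪α, α⟫ = ⟪RS.θ, RS.θ⟫) ∧
    (∃ α ∈ RS.Δ, ⟪α, α⟫ = ls) ∧ ⟪RS.θ, RS.θ⟫ = ratio * ls

/-- `Δ` has roots of two different lengths. -/
def TwoLengths : Prop := ∃ ratio : ℝ, RS.LengthRatio ratio

/-- The simple roots `Π(Δ⁺_s)` of the root system `Δ_s` of short roots with respect to
the positive system `Δ⁺_s`: the short positive roots that are not sums of two short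
positive roots. -/
def shortSimple : Set V :=
  {α ∈ RS.shortPos | ¬ ∃ β ∈ RS.shortPos, ∃ γ ∈ RS.shortPos, α = β + γ}

/-- The positive affine roots `Δ̂⁺`, an affine root `μ + kδ` being encoded as the pair
`(μ, k)`. -/
def affPos : Set (V × ℝ) :=
  {β : V × ℝ | β.1 ∈ RS.Δ ∧ (0 < β.2 ∨ (β.2 = 0 ∧ β.1 ∈ RS.pos))}

/-- A pair `(v, r)` with `v ∈ W`, `r ∈ Q∨` represents the element `w = v·t_r` of the
affine Weyl group `Ŵ = W ⋉ Q∨`; it is dominant if `w(α) ∈ Δ̂⁺` for all `α ∈ Π`. -/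
def IsDominantPair (v : V ≃ₗ[ℝ] V) (r : V) : Prop :=
  v ∈ RS.weylGroup ∧ r ∈ RS.corootLattice ∧
    ∀ i, affAct v r (RS.simpleRoot i, 0) ∈ RS.affPos

/-- `N(w) = {β ∈ Δ̂⁺ | w(β) ∈ -Δ̂⁺}` for `w = v·t_r`. -/
def Nset (v : V ≃ₗ[ℝ] V) (r : V) : Set (V × ℝ) :=
  {β : V × ℝ | β ∈ RS.affPos ∧ -(affAct v r β) ∈ RS.affPos}

/-- The first layer ideal `I_w = {μ ∈ Δ⁺ | δ - μ ∈ N(w)}` of `w = v·t_r`. -/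
def firstLayerIdeal (v : V ≃ₗ[ℝ] V) (r : V) : Set V :=
  {μ ∈ RS.pos | ((-μ, (1 : ℝ)) : V × ℝ) ∈ RS.Nset v r}

/-- `w = v·t_r` is minimal: dominant, and for every affine simple root `α ∈ Π̂`,
writing `w⁻¹(α) = kδ + μ`, one has `k ≥ -1`. -/
def IsMinimalPair (v : V ≃ₗ[ℝ] V) (r : V) : Prop :=
  RS.IsDominantPair v r ∧
    (∀ i, -1 ≤ (affActInv v r (RS.simpleRoot i, 0)).2) ∧
    -1 ≤ (affActInv v r (-RS.θ, 1)).2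

/-- `w = v·t_r` is maximal: dominant, and for every affine simple root `α ∈ Π̂`,
writing `w⁻¹(α) = kδ + μ`, one has `k ≤ 1`. -/
def IsMaximalPair (v : V ≃ₗ[ℝ] V) (r : V) : Prop :=
  RS.IsDominantPair v r ∧
    (∀ i, (affActInv v r (RS.simpleRoot i, 0)).2 ≤ 1) ∧
    (affActInv v r (-RS.θ, 1)).2 ≤ 1

/-- `w = v·t_r` is `s`-minimal: dominant, `k ≥ -1` for short simple `α`, and `k ≥ 0`
for `α ∈ Π̂_l = Π_l ∪ {α₀}`, where `w⁻¹(α) = kδ + μ`. -/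
def IsSMinimalPair (v : V ≃ₗ[ℝ] V) (r : V) : Prop :=
  RS.IsDominantPair v r ∧
    (∀ i, RS.IsShort (RS.simpleRoot i) →
      -1 ≤ (affActInv v r (RS.simpleRoot i, 0)).2) ∧
    (∀ i, ¬ RS.IsShort (RS.simpleRoot i) →
      0 ≤ (affActInv v r (RS.simpleRoot i, 0)).2) ∧
    0 ≤ (affActInv v r (-RS.θ, 1)).2

/-- `w = v·t_r` is `s`-maximal: dominant, `k ≤ 1` for short simple `α`, and `k ≤ 0`
for `α ∈ Π̂_l = Π_l ∪ {α₀}`, where `w⁻¹(α) = kδ + μ`. -/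
def IsSMaximalPair (v : V ≃ₗ[ℝ] V) (r : V) : Prop :=
  RS.IsDominantPair v r ∧
    (∀ i, RS.IsShort (RS.simpleRoot i) →
      (affActInv v r (RS.simpleRoot i, 0)).2 ≤ 1) ∧
    (∀ i, ¬ RS.IsShort (RS.simpleRoot i) →
      (affActInv v r (RS.simpleRoot i, 0)).2 ≤ 0) ∧
    (affActInv v r (-RS.θ, 1)).2 ≤ 0

/-- The open fundamental Weyl chamber `C`. -/
def chamber : Set V := {x : V | ∀ i, 0 < ⟪x, RS.simpleRoot i⟫}

/-- The open fundamental alcove `A`. -/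
def alcove : Set V := {x : V | (∀ i, 0 < ⟪x, RS.simpleRoot i⟫) ∧ ⟪x, RS.θ⟫ < 1}

/-- The affine arrangement of all hyperplanes `{x | (x,μ) = k}`, `μ ∈ Δ⁺`, `k ∈ ℤ`,
whose regions are the alcoves. -/
def affineArrangement : Set (V × ℝ) :=
  {h : V × ℝ | h.1 ∈ RS.pos ∧ ∃ k : ℤ, h.2 = (k : ℝ)}

/-- The dominant region `R_I` of the Catalan (equivalently, Shi) arrangement attached
to an ideal `I ⊆ Δ⁺` under the Shi bijection. -/
def regionOfIdeal (I : Set V) : Set V :=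
  {x ∈ RS.chamber | (∀ γ ∈ I, 1 < ⟪x, γ⟫) ∧ ∀ γ ∈ RS.pos \ I, ⟪x, γ⟫ < 1}

/-- The semi-Catalan arrangement `Cat_s(Δ)`. -/
def semiCatalan : Set (V × ℝ) :=
  {h : V × ℝ | h.1 ∈ RS.shortPos ∧ (h.2 = -1 ∨ h.2 = 0 ∨ h.2 = 1)} ∪
    {h : V × ℝ | h.1 ∈ RS.longPos ∧ h.2 = 0}

/-- The `m`-semi-Catalan arrangement `Cat_s^m(Δ)`. -/
def semiCatalanM (m : ℕ) : Set (V × ℝ) :=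
  {h : V × ℝ | h.1 ∈ RS.shortPos ∧ ∃ k : ℤ, |k| ≤ (m : ℤ) ∧ h.2 = (k : ℝ)} ∪
    {h : V × ℝ | h.1 ∈ RS.longPos ∧ h.2 = 0}

/-- The region `R_Γ^(s)` of the semi-Catalan arrangement attached to a short
antichain `Γ`. -/
def sRegion (Γ : Set V) : Set V :=
  {x ∈ RS.chamber | (∀ μ ∈ RS.idealGen Γ ∩ RS.shortPos, 1 < ⟪x, μ⟫) ∧
    ∀ μ ∈ RS.shortPos \ RS.idealGen Γ, ⟪x, μ⟫ < 1}

/-- `α` has height `n` (sum of the coefficients over the simple roots). -/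
def heightIs (α : V) (n : ℕ) : Prop :=
  ∃ c : Fin p → ℕ, α = ∑ i, (c i : ℝ) • RS.simpleRoot i ∧ ∑ i, c i = n

/-- `e` enumerates the exponents `e₁, …, e_p` of the Weyl group `W`, characterized by the
Shapiro–Kostant–Steinberg property: for every `k ≥ 1`, the number of positive roots of
height `k` equals the number of exponents that are `≥ k`. -/
def IsExponents (e : Fin p → ℕ) : Prop :=
  ∀ k : ℕ, 1 ≤ k →
    {α ∈ RS.pos | RS.heightIs α k}.ncard = {i : Fin p | k ≤ e i}.ncard

/-- `h` is the Coxeter number of `W`, characterized by `#Δ = p·h`. -/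
def IsCoxeterNumber (h : ℕ) : Prop := RS.Δ.ncard = p * h

open Classical in
/-- `g` is the sum of the coefficients of the short simple roots in the expression
`θ = Σ cᵢ αᵢ` of the highest root. -/
def IsShortCoeffSum (g : ℕ) : Prop :=
  ∃ c : Fin p → ℕ, RS.θ = ∑ i, (c i : ℝ) • RS.simpleRoot i ∧
    (∑ i, if RS.IsShort (RS.simpleRoot i) then c i else 0) = g

open Classical in
/-- The number of constraints of the simplex
`D_max = {x | (x,αᵢ) ≤ 1 ∀i, (x,θ) ≥ 0}` that are active (hold with equality) at `x`;
for `x ∈ D_max` this is the codimension of the face of `D_max` containing `x`. -/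
noncomputable def dmaxFaceCodim (x : V) : ℕ :=
  {i : Fin p | ⟪x, RS.simpleRoot i⟫ = 1}.ncard + (if ⟪x, RS.θ⟫ = 0 then 1 else 0)

end RootSystemData

namespace ST8

open Set

variable {V : Type*} [NormedAddCommGroup V] [InnerProductSpace ℝ V] {p : ℕ}
  (RS : RootSystemData V p)

/-! ### Basics -/

lemma pos_sub : RS.pos ⊆ RS.Δ := by
  rw [RS.pos_def]; intro a ha; exact ha.1

lemma theta_mem : RS.θ ∈ RS.Δ := pos_sub RS RS.θ_mem

lemma root_ne_zero {α : V} (h : α ∈ RS.Δ) : α ≠ 0 :=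
  fun h0 => RS.zero_notMem (h0 ▸ h)

lemma root_inner_self_pos {α : V} (h : α ∈ RS.Δ) : 0 < ⟪α, α⟫ :=
  lt_of_le_of_ne real_inner_self_nonneg
    (Ne.symm (inner_self_ne_zero.mpr (root_ne_zero RS h)))

lemma pos_coeffs {β : V} (h : β ∈ RS.pos) :
    ∃ n : Fin p → ℕ, β = ∑ i, (n i : ℝ) • RS.simpleRoot i := by
  rw [RS.pos_def] at h; exact h.2

lemma span_simple : Submodule.span ℝ (Set.range RS.simpleRoot) = ⊤ := by
  refine le_antisymm le_top ?_
  rw [← RS.span_eq_top]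
  refine Submodule.span_le.mpr ?_
  intro α hα
  have hmem : ∀ β ∈ RS.pos, β ∈ Submodule.span ℝ (Set.range RS.simpleRoot) := by
    intro β hβ
    obtain ⟨n, hn⟩ := pos_coeffs RS hβ
    rw [hn]
    exact Submodule.sum_mem _ fun i _ =>
      Submodule.smul_mem _ _ (Submodule.subset_span ⟨i, rfl⟩)
  rcases RS.pos_or_neg α hα with h | h
  · exact hmem α h
  · have := hmem _ h
    simpa using Submodule.neg_mem _ this

lemma findim (RS' : RootSystemData V p) : FiniteDimensional ℝ V := by
  have b : Basis (Fin p) ℝ V :=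
    Basis.mk RS'.simpleRoot_indep (by rw [span_simple RS'])
  exact Module.Basis.finiteDimensional_of_finite b

/-- The coordinates map `x ↦ ((x, αᵢ))ᵢ`. -/
def phi : V →ₗ[ℝ] (Fin p → ℝ) where
  toFun x i := ⟪x, RS.simpleRoot i⟫
  map_add' x y := by funext i; exact inner_add_left _ _ _
  map_smul' c x := by funext i; exact real_inner_smul_left _ _ _

lemma phi_apply (x : V) (i : Fin p) : phi RS x i = ⟪x, RS.simpleRoot i⟫ := rfl

lemma eq_zero_of_inner_simple_zero {x : V} (h : ∀ i, ⟪x, RS.simpleRoot i⟫ = 0) :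
    x = 0 := by
  have hx : x ∈ (⊤ : Submodule ℝ V) := trivial
  rw [← span_simple RS] at hx
  obtain ⟨c, hc⟩ := (Submodule.mem_span_range_iff_exists_fun ℝ).mp hx
  have : ⟪x, x⟫ = 0 := by
    nth_rewrite 2 [← hc]
    rw [inner_sum]
    refine Finset.sum_eq_zero fun i _ => ?_
    rw [real_inner_smul_right, h i, mul_zero]
  exact inner_self_eq_zero.mp this

lemma phi_inj : Function.Injective (phi RS) := by
  rw [← LinearMap.ker_eq_bot]
  refine (Submodule.eq_bot_iff _).mpr fun x hx => ?_
  refine eq_zero_of_inner_simple_zero RS fun i => ?_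
  have := congrFun (hx : phi RS x = 0) i
  simpa [phi_apply] using this

lemma phi_surj : Function.Surjective (phi RS) := by
  haveI := findim RS
  refine (LinearMap.injective_iff_surjective_of_finrank_eq_finrank ?_).mp (phi_inj RS)
  rw [RS.finrank_eq]
  simp

lemma exists_dual (t : Fin p → ℝ) : ∃ z : V, ∀ i, ⟪z, RS.simpleRoot i⟫ = t i := by
  obtain ⟨z, hz⟩ := phi_surj RS t
  exact ⟨z, fun i => congrFun hz i⟩

lemma inner_int_pos {z : V} (hz : ∀ i, ∃ k : ℤ, ⟪z, RS.simpleRoot i⟫ = k)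
    {β : V} (hβ : β ∈ RS.pos) : ∃ k : ℤ, ⟪z, β⟫ = k := by
  obtain ⟨n, hn⟩ := pos_coeffs RS hβ
  choose k hk using hz
  refine ⟨∑ i, (n i : ℤ) * k i, ?_⟩
  rw [hn, inner_sum]
  push_cast
  exact Finset.sum_congr rfl fun i _ => by rw [real_inner_smul_right, hk i]

lemma inner_int {z : V} (hz : ∀ i, ∃ k : ℤ, ⟪z, RS.simpleRoot i⟫ = k)
    {α : V} (hα : α ∈ RS.Δ) : ∃ k : ℤ, ⟪z, α⟫ = k := by
  rcases RS.pos_or_neg α hα with h | h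
  · exact inner_int_pos RS hz h
  · obtain ⟨k, hk⟩ := inner_int_pos RS hz h
    refine ⟨-k, ?_⟩
    rw [inner_neg_right] at hk
    push_cast
    linarith


/-! ### Weyl group elements are isometries preserving the roots and the lattices -/

lemma sRefl_apply (α x : V) : sRefl α x = reflFun α x := rfl

lemma sRefl_symm (α : V) : (sRefl α).symm = sRefl α := by
  apply LinearEquiv.toLinearMap_injective
  ext x
  rfl

lemma reflFun_eq_sub (α x : V) : reflFun α x = x - (2 * ⟪α, x⟫ / ⟪α, α⟫) • α := rfl

lemma sRefl_sRefl (α x : V) : sRefl α (sRefl α x) = x := reflFun_involutive α x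

lemma reflFun_inner (α x y : V) : ⟪reflFun α x, reflFun α y⟫ = ⟪x, y⟫ := by
  by_cases h : α = 0
  · simp [reflFun, h]
  · have hs : ⟪α, α⟫ ≠ 0 := inner_self_ne_zero.mpr h
    simp only [reflFun, inner_sub_left, inner_sub_right, real_inner_smul_left,
      real_inner_smul_right]
    rw [real_inner_comm α x]
    field_simp
    ring

/-- The conjunction of properties of Weyl group elements we shall need. -/
def GoodW (v : V ≃ₗ[ℝ] V) : Prop :=
  (∀ x y : V, ⟪v x, v y⟫ = ⟪x, y⟫) ∧ (∀ α ∈ RS.Δ, v α ∈ RS.Δ) ∧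
    (∀ α ∈ RS.Δ, v.symm α ∈ RS.Δ)

lemma goodW {v : V ≃ₗ[ℝ] V} (hv : v ∈ RS.weylGroup) : GoodW RS v := by
  rw [RootSystemData.weylGroup] at hv
  induction hv using Subgroup.closure_induction with
  | mem w hw =>
    obtain ⟨α, hα, rfl⟩ := hw
    refine ⟨fun x y => reflFun_inner α x y, ?_, ?_⟩
    · intro β hβ; exact RS.reflect_mem α hα β hβ
    · intro β hβ; rw [sRefl_symm]; exact RS.reflect_mem α hα β hβ
  | one => exact ⟨fun x y => rfl, fun α h => h, fun α h => h⟩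
  | mul w w' hw hw' pw pw' =>
    refine ⟨fun x y => ?_, fun α h => ?_, fun α h => ?_⟩
    · show ⟪w (w' x), w (w' y)⟫ = ⟪x, y⟫
      rw [pw.1, pw'.1]
    · exact pw.2.1 _ (pw'.2.1 _ h)
    · show (w * w').symm α ∈ RS.Δ
      have : (w * w').symm α = w'.symm (w.symm α) := rfl
      rw [this]
      exact pw'.2.2 _ (pw.2.2 _ h)
  | inv w hw pw =>
    refine ⟨fun x y => ?_, fun α h => pw.2.2 _ h, fun α h => pw.2.1 _ h⟩
    show ⟪w.symm x, w.symm y⟫ = ⟪x, y⟫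
    calc ⟪w.symm x, w.symm y⟫ = ⟪w (w.symm x), w (w.symm y)⟫ := (pw.1 _ _).symm
    _ = ⟪x, y⟫ := by rw [LinearEquiv.apply_symm_apply, LinearEquiv.apply_symm_apply]

lemma w_inner {v : V ≃ₗ[ℝ] V} (hv : v ∈ RS.weylGroup) (x y : V) :
    ⟪v x, v y⟫ = ⟪x, y⟫ := (goodW RS hv).1 x y

lemma w_inner_symm {v : V ≃ₗ[ℝ] V} (hv : v ∈ RS.weylGroup) (x y : V) :
    ⟪v x, y⟫ = ⟪x, v.symm y⟫ := by
  calc ⟪v x, y⟫ = ⟪v x, v (v.symm y)⟫ := by rw [LinearEquiv.apply_symm_apply]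
  _ = ⟪x, v.symm y⟫ := w_inner RS hv _ _

lemma w_root {v : V ≃ₗ[ℝ] V} (hv : v ∈ RS.weylGroup) {α : V} (hα : α ∈ RS.Δ) :
    v α ∈ RS.Δ := (goodW RS hv).2.1 α hα

lemma w_root_symm {v : V ≃ₗ[ℝ] V} (hv : v ∈ RS.weylGroup) {α : V} (hα : α ∈ RS.Δ) :
    v.symm α ∈ RS.Δ := (goodW RS hv).2.2 α hα

lemma w_corootVec {v : V ≃ₗ[ℝ] V} (hv : v ∈ RS.weylGroup) {α : V} (hα : α ∈ RS.Δ) :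
    v (corootVec α) = corootVec (v α) := by
  rw [corootVec, corootVec, map_smul, w_inner RS hv]

lemma w_coroot {v : V ≃ₗ[ℝ] V} (hv : v ∈ RS.weylGroup) {r : V}
    (hr : r ∈ RS.corootLattice) : v r ∈ RS.corootLattice := by
  rw [RootSystemData.corootLattice] at hr ⊢
  induction hr using AddSubgroup.closure_induction with
  | mem x hx =>
    obtain ⟨α, hα, rfl⟩ := hx
    rw [w_corootVec RS hv hα]
    exact AddSubgroup.subset_closure ⟨v α, w_root RS hv hα, rfl⟩
  | zero => simpa using AddSubgroup.zero_mem _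
  | add x y hx hy px py => rw [map_add]; exact AddSubgroup.add_mem _ px py
  | neg x hx px => rw [map_neg]; exact AddSubgroup.neg_mem _ px

lemma w_coroot_symm {v : V ≃ₗ[ℝ] V} (hv : v ∈ RS.weylGroup) {r : V}
    (hr : r ∈ RS.corootLattice) : v.symm r ∈ RS.corootLattice :=
  w_coroot RS (inv_mem hv) hr

lemma w_coweight {v : V ≃ₗ[ℝ] V} (hv : v ∈ RS.weylGroup) {x : V}
    (hx : x ∈ RS.coweightLattice) : v x ∈ RS.coweightLattice := by
  intro α hα
  rw [w_inner_symm RS hv]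
  exact hx _ (w_root_symm RS hv hα)

lemma coroot_le_coweight {r : V} (hr : r ∈ RS.corootLattice) :
    r ∈ RS.coweightLattice := by
  rw [RootSystemData.corootLattice] at hr
  induction hr using AddSubgroup.closure_induction with
  | mem x hx =>
    obtain ⟨α, hα, rfl⟩ := hx
    intro β hβ
    obtain ⟨n, hn⟩ := RS.crystallographic α hα β hβ
    refine ⟨n, ?_⟩
    rw [corootVec, real_inner_smul_left, ← hn]
    ring
  | zero => exact AddSubgroup.zero_mem _
  | add x y hx hy px py => exact AddSubgroup.add_mem _ px py
  | neg x hx px => exact AddSubgroup.neg_mem _ px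

/-! ### Finiteness of lattice points in bounded sets -/

lemma sep_finite [FiniteDimensional ℝ V] {s : Set V} {ε : ℝ} (hε : 0 < ε)
    (hsep : ∀ y ∈ s, ∀ z ∈ s, y ≠ z → ε ≤ dist y z) {c : V} {R : ℝ}
    (hb : s ⊆ Metric.closedBall c R) : s.Finite := by
  have hclosed : IsClosed s := by
    refine isClosed_of_closure_subset fun x hx => ?_
    obtain ⟨y, hy, hxy⟩ := Metric.mem_closure_iff.mp hx (ε / 2) (half_pos hε)
    by_cases hxy0 : x = y
    · rwa [hxy0]
    · have hd : 0 < dist x y := dist_pos.mpr hxy0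
      obtain ⟨z, hz, hxz⟩ :=
        Metric.mem_closure_iff.mp hx (min (ε / 2) (dist x y)) (lt_min (half_pos hε) hd)
      have hzy : z = y := by
        by_contra hne
        have h1 := hsep z hz y hy hne
        have h2 : dist z y ≤ dist z x + dist x y := dist_triangle z x y
        have h3 : dist z x < ε / 2 := by
          rw [dist_comm]; exact hxz.trans_le (min_le_left _ _)
        linarith [hxz.trans_le (min_le_right _ _)]
      rw [hzy] at hxz
      exact absurd (hxz.trans_le (min_le_right _ _)) (lt_irrefl _)
  have hcomp : IsCompact s :=
    Metric.isCompact_of_isClosed_isBounded hclosed (Metric.isBounded_closedBall.subset hb)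
  have hdisc : DiscreteTopology s := by
    rw [discreteTopology_iff_isOpen_singleton]
    rintro ⟨y, hy⟩
    have hset : ({⟨y, hy⟩} : Set s) = (Subtype.val) ⁻¹' (Metric.ball y ε) := by
      ext ⟨z, hz⟩
      simp only [Set.mem_singleton_iff, Set.mem_preimage, Metric.mem_ball, Subtype.mk.injEq]
      constructor
      · rintro rfl; simpa using hε
      · intro h
        by_contra hne
        exact absurd (hsep z hz y hy hne) (not_le.mpr h)
    rw [hset]
    exact Metric.isOpen_ball.preimage continuous_subtype_val
  exact hcomp.finite (isDiscrete_iff_discreteTopology.mpr hdisc)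

lemma coweight_sep :
    ∃ ε > 0, ∀ y ∈ RS.coweightLattice, ∀ z ∈ RS.coweightLattice,
      y ≠ z → ε ≤ dist y z := by
  haveI := findim RS
  set φ := LinearMap.toContinuousLinearMap (phi RS) with hφ
  refine ⟨(‖φ‖ + 1)⁻¹, by positivity, ?_⟩
  intro y hy z hz hne
  have hw : y - z ∈ RS.coweightLattice := sub_mem hy hz
  have hw0 : y - z ≠ 0 := sub_ne_zero_of_ne hne
  have hex : ∃ i, ⟪y - z, RS.simpleRoot i⟫ ≠ 0 := by
    by_contra hall
    push_neg at hall
    exact hw0 (eq_zero_of_inner_simple_zero RS hall)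
  obtain ⟨i, hi⟩ := hex
  obtain ⟨k, hk⟩ := hw _ (RS.simpleRoot_mem i)
  have hk0 : k ≠ 0 := by
    rintro rfl
    exact hi (by simpa using hk)
  have h1 : (1 : ℝ) ≤ |⟪y - z, RS.simpleRoot i⟫| := by
    rw [hk]
    exact_mod_cast Int.one_le_abs hk0
  have h2 : |⟪y - z, RS.simpleRoot i⟫| ≤ ‖φ (y - z)‖ := by
    have : φ (y - z) i = ⟪y - z, RS.simpleRoot i⟫ := rfl
    rw [← this]
    exact norm_le_pi_norm (φ (y - z)) i
  have h3 : ‖φ (y - z)‖ ≤ ‖φ‖ * ‖y - z‖ := φ.le_opNorm _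
  have h4 : (1 : ℝ) ≤ (‖φ‖ + 1) * ‖y - z‖ := by
    have h5 : ‖φ‖ * ‖y - z‖ ≤ (‖φ‖ + 1) * ‖y - z‖ :=
      mul_le_mul_of_nonneg_right (by linarith) (norm_nonneg _)
    linarith
  rw [dist_eq_norm]
  rw [inv_le_iff_one_le_mul₀ (by positivity)]
  linarith [h4]

lemma coset_ball_finite (z c : V) (R : ℝ) :
    ({y : V | ∃ l ∈ RS.coweightLattice, y = z + l} ∩ Metric.closedBall c R).Finite := by
  haveI := findim RS
  obtain ⟨ε, hε, hsep⟩ := coweight_sep RS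
  refine sep_finite hε ?_ (Set.inter_subset_right)
  rintro y ⟨⟨l, hl, rfl⟩, -⟩ y' ⟨⟨l', hl', rfl⟩, -⟩ hne
  have hll' : l ≠ l' := by rintro rfl; exact hne rfl
  have : dist (z + l) (z + l') = dist l l' := by
    rw [dist_eq_norm, dist_eq_norm]
    congr 1
    abel
  rw [this]
  exact hsep l hl l' hl' hll'

lemma weyl_finite : {v : V ≃ₗ[ℝ] V | v ∈ RS.weylGroup}.Finite := by
  have himg : ((fun v : V ≃ₗ[ℝ] V => fun i : Fin p => v (RS.simpleRoot i)) ''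
      {v | v ∈ RS.weylGroup}).Finite := by
    refine Set.Finite.subset (Set.Finite.pi (fun _ : Fin p => RS.finite)) ?_
    rintro _ ⟨v, hv, rfl⟩
    rw [Set.mem_univ_pi]
    intro i
    exact w_root RS hv (RS.simpleRoot_mem i)
  refine Set.Finite.of_finite_image himg ?_
  rintro v hv w hw h
  have heq : ∀ i, v (RS.simpleRoot i) = w (RS.simpleRoot i) := fun i => congrFun h i
  apply LinearEquiv.toLinearMap_injective
  apply LinearMap.ext_on (span_simple RS)
  rintro x ⟨i, rfl⟩
  exact heq i

/-! ### Descent to the (dilated) fundamental alcove -/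

/-- The orbit of `x` under `W ⋉ qQ∨` (acting via the `∗`-action). -/
def Orb (q : ℝ) (x : V) : Set V :=
  {y | ∃ v ∈ RS.weylGroup, ∃ r ∈ RS.corootLattice, y = v (x + q • r)}

lemma orb_ball_finite (q : ℝ) (x c : V) (R : ℝ)
    (hqP : ∀ r ∈ RS.corootLattice, q • r ∈ RS.coweightLattice) :
    (Orb RS q x ∩ Metric.closedBall c R).Finite := by
  have hsub : Orb RS q x ∩ Metric.closedBall c R ⊆
      ⋃ v ∈ {v : V ≃ₗ[ℝ] V | v ∈ RS.weylGroup},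
        ({y : V | ∃ l ∈ RS.coweightLattice, y = v x + l} ∩ Metric.closedBall c R) := by
    rintro y ⟨⟨v, hv, r, hr, rfl⟩, hball⟩
    refine Set.mem_biUnion hv ⟨⟨q • (v r), hqP _ (w_coroot RS hv hr), ?_⟩, hball⟩
    rw [map_add, map_smul]
  exact Set.Finite.subset
    ((weyl_finite RS).biUnion fun v _ => coset_ball_finite RS (v x) c R) hsub

lemma descent (q : ℝ) (hq : 0 < q)
    (hqP : ∀ r ∈ RS.corootLattice, q • r ∈ RS.coweightLattice)
    {c : V} (hc1 : ∀ i, 0 < ⟪c, RS.simpleRoot i⟫) (hc2 : ⟪c, RS.θ⟫ < q) (x : V) :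
    ∃ v ∈ RS.weylGroup, ∃ r ∈ RS.corootLattice,
      (∀ i, 0 ≤ ⟪v (x + q • r), RS.simpleRoot i⟫) ∧ ⟪v (x + q • r), RS.θ⟫ ≤ q := by
  classical
  set K := Orb RS q x ∩ Metric.closedBall c (dist x c) with hK
  have hxK : x ∈ K := by
    constructor
    · exact ⟨1, one_mem _, 0, AddSubgroup.zero_mem _, by simp⟩
    · exact Metric.mem_closedBall.mpr le_rfl
  obtain ⟨y, hyK, hymin⟩ :=
    Set.exists_min_image K (fun y => dist y c) (orb_ball_finite RS q x c _ hqP) ⟨x, hxK⟩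
  obtain ⟨v, hv, r, hr, hyeq⟩ := hyK.1
  refine ⟨v, hv, r, hr, ?_⟩
  rw [← hyeq]
  by_contra hcon
  -- exhibit a strictly closer orbit point y'
  have hstep : ∃ y' ∈ Orb RS q x, dist y' c < dist y c := by
    rw [not_and_or] at hcon
    rcases hcon with hcon | hcon
    · push_neg at hcon
      obtain ⟨i, hi⟩ := hcon
      set a := RS.simpleRoot i with ha
      have hA : ⟪y, a⟫ < 0 := hi
      have hC : 0 < ⟪c, a⟫ := hc1 i
      have hs : 0 < ⟪a, a⟫ := root_inner_self_pos RS (RS.simpleRoot_mem i)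
      set k : ℝ := 2 * ⟪a, y⟫ / ⟪a, a⟫ with hk
      refine ⟨reflFun a y, ?_, ?_⟩
      · refine ⟨sRefl a * v, mul_mem (Subgroup.subset_closure ⟨a, RS.simpleRoot_mem i, rfl⟩) hv,
          r, hr, ?_⟩
        show reflFun a y = sRefl a (v (x + q • r))
        rw [← hyeq]
        rfl
      · have hrw : reflFun a y - c = (y - c) - k • a := by
          rw [reflFun_eq_sub, hk]; abel
        have hky : k = 2 * ⟪y, a⟫ / ⟪a, a⟫ := by rw [hk, real_inner_comm]
        have hexp : ‖(y - c) - k • a‖ ^ 2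
            = ‖y - c‖ ^ 2 - 2 * (k * (⟪y, a⟫ - ⟪c, a⟫)) + k ^ 2 * ⟪a, a⟫ := by
          rw [@norm_sub_sq_real V]
          have h1 : ⟪y - c, k • a⟫ = k * (⟪y, a⟫ - ⟪c, a⟫) := by
            rw [real_inner_smul_right, inner_sub_left]
          have h2 : ‖k • a‖ ^ 2 = k ^ 2 * ⟪a, a⟫ := by
            rw [norm_smul, mul_pow, real_inner_self_eq_norm_sq, Real.norm_eq_abs, sq_abs]
          rw [h1, h2]
        have hkey : k ^ 2 * ⟪a, a⟫ - 2 * (k * (⟪y, a⟫ - ⟪c, a⟫)) = 4 * ⟪y, a⟫ * ⟪c, a⟫ / ⟪a, a⟫ := by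
          rw [hky]
          field_simp
          ring
        have hneg : 4 * ⟪y, a⟫ * ⟪c, a⟫ / ⟪a, a⟫ < 0 := by
          apply div_neg_of_neg_of_pos _ hs
          nlinarith
        have hlt : ‖reflFun a y - c‖ ^ 2 < ‖y - c‖ ^ 2 := by
          rw [hrw, hexp]; linarith
        rw [dist_eq_norm, dist_eq_norm]
        exact lt_of_pow_lt_pow_left₀ 2 (norm_nonneg _) hlt
    · push_neg at hcon
      set a := RS.θ with ha
      have haΔ : a ∈ RS.Δ := theta_mem RS
      have hA : q < ⟪y, a⟫ := hcon
      have hC : ⟪c, a⟫ < q := hc2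
      have hs : 0 < ⟪a, a⟫ := root_inner_self_pos RS haΔ
      set t : ℝ := ⟪y, a⟫ - q with hT
      have hT0 : 0 < t := by simp only [hT]; linarith
      set k : ℝ := 2 * t / ⟪a, a⟫ with hk
      refine ⟨y - k • a, ?_, ?_⟩
      · refine ⟨sRefl a * v, mul_mem (Subgroup.subset_closure ⟨a, haΔ, rfl⟩) hv,
          r + v.symm (sRefl a (corootVec a)), ?_, ?_⟩
        · refine AddSubgroup.add_mem _ hr ?_
          refine w_coroot_symm RS hv ?_
          refine w_coroot RS (Subgroup.subset_closure ⟨a, haΔ, rfl⟩) ?_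
          exact AddSubgroup.subset_closure ⟨a, haΔ, rfl⟩
        · have heq2 : sRefl a y + q • corootVec a = y - k • a := by
            have hss : ⟪a, a⟫ ≠ 0 := ne_of_gt hs
            rw [sRefl_apply, reflFun_eq_sub, corootVec, smul_smul, sub_add, ← sub_smul]
            congr 1
            rw [hk, hT, real_inner_comm a y]
            field_simp
          have hyv : v (x + q • (r + v.symm (sRefl a (corootVec a))))
              = y + q • (sRefl a (corootVec a)) := by
            rw [smul_add, ← add_assoc, map_add, map_smul, LinearEquiv.apply_symm_apply, ← hyeq]
          have hstep2 : (sRefl a * v) (x + q • (r + v.symm (sRefl a (corootVec a))))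
              = sRefl a y + q • (corootVec a) := by
            show sRefl a (v (x + q • (r + v.symm (sRefl a (corootVec a))))) = _
            rw [hyv, map_add, map_smul, sRefl_sRefl]
          rw [hstep2, heq2]
      · have hrw : (y - k • a) - c = (y - c) - k • a := by abel
        have hexp : ‖(y - c) - k • a‖ ^ 2
            = ‖y - c‖ ^ 2 - 2 * (k * (⟪y, a⟫ - ⟪c, a⟫)) + k ^ 2 * ⟪a, a⟫ := by
          rw [@norm_sub_sq_real V]
          have h1 : ⟪y - c, k • a⟫ = k * (⟪y, a⟫ - ⟪c, a⟫) := by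
            rw [real_inner_smul_right, inner_sub_left]
          have h2 : ‖k • a‖ ^ 2 = k ^ 2 * ⟪a, a⟫ := by
            rw [norm_smul, mul_pow, real_inner_self_eq_norm_sq, Real.norm_eq_abs, sq_abs]
          rw [h1, h2]
        have hY : ⟪y, a⟫ = t + q := by rw [hT]; ring
        have hkey : k ^ 2 * ⟪a, a⟫ - 2 * (k * (⟪y, a⟫ - ⟪c, a⟫))
            = 4 * t / ⟪a, a⟫ * (⟪c, a⟫ - q) := by
          rw [hk, hY]
          field_simp
          ring
        have hneg : 4 * t / ⟪a, a⟫ * (⟪c, a⟫ - q) < 0 :=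
          mul_neg_of_pos_of_neg (by positivity) (by linarith)
        have hlt : ‖(y - k • a) - c‖ ^ 2 < ‖y - c‖ ^ 2 := by
          rw [hrw, hexp]; linarith
        rw [dist_eq_norm, dist_eq_norm]
        exact lt_of_pow_lt_pow_left₀ 2 (norm_nonneg _) hlt
  obtain ⟨y', hy', hlt⟩ := hstep
  have hy'K : y' ∈ K := ⟨hy', Metric.mem_closedBall.mpr (le_trans hlt.le hyK.2)⟩
  exact absurd (hymin y' hy'K) (not_le.mpr hlt)

/-! ### Walls and the dilated alcove -/

/-- `x` lies on no hyperplane `(x, β) = qk` of the `q`-dilated affine arrangement. -/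
def OffWalls (q : ℝ) (x : V) : Prop := ∀ β ∈ RS.Δ, ∀ k : ℤ, ⟪x, β⟫ ≠ q * k

/-- `x` lies in the open `q`-dilated fundamental alcove. -/
def InA (q : ℝ) (x : V) : Prop := (∀ i, 0 < ⟪x, RS.simpleRoot i⟫) ∧ ⟪x, RS.θ⟫ < q

/-- `x` lies in the closed `q`-dilated fundamental alcove. -/
def InT (q : ℝ) (x : V) : Prop := (∀ i, 0 ≤ ⟪x, RS.simpleRoot i⟫) ∧ ⟪x, RS.θ⟫ ≤ q

lemma inA_offWalls {q : ℝ} (hq : 0 < q) {x : V} (hx : InA RS q x) :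
    OffWalls RS q x := by
  have key : ∀ β ∈ RS.pos, 0 < ⟪x, β⟫ ∧ ⟪x, β⟫ < q := by
    intro β hβ
    obtain ⟨n, hn⟩ := pos_coeffs RS hβ
    constructor
    · have hβ0 : β ≠ 0 := root_ne_zero RS (pos_sub RS hβ)
      have hex : ∃ j, n j ≠ 0 := by
        by_contra hall
        push_neg at hall
        refine hβ0 ?_
        rw [hn]
        simp [hall]
      obtain ⟨j, hj⟩ := hex
      rw [hn, inner_sum]
      refine Finset.sum_pos' (fun i _ => ?_) ⟨j, Finset.mem_univ j, ?_⟩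
      · rw [real_inner_smul_right]
        exact mul_nonneg (Nat.cast_nonneg _) (le_of_lt (hx.1 i))
      · rw [real_inner_smul_right]
        exact mul_pos (by exact_mod_cast Nat.pos_of_ne_zero hj) (hx.1 j)
    · obtain ⟨m, hm⟩ := RS.θ_highest β hβ
      have hθ : ⟪x, RS.θ⟫ = ⟪x, β⟫ + ∑ i, (m i : ℝ) * ⟪x, RS.simpleRoot i⟫ := by
        rw [hm, inner_add_right, inner_sum]
        congr 1
        exact Finset.sum_congr rfl fun i _ => real_inner_smul_right _ _ _
      have hsum : 0 ≤ ∑ i, (m i : ℝ) * ⟪x, RS.simpleRoot i⟫ :=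
        Finset.sum_nonneg fun i _ => mul_nonneg (Nat.cast_nonneg _) (le_of_lt (hx.1 i))
      have := hx.2
      linarith
  intro β hβ k hk
  rcases RS.pos_or_neg β hβ with h | h
  · obtain ⟨h1, h2⟩ := key β h
    rw [hk] at h1 h2
    have hk1 : (0 : ℤ) < k := by
      by_contra hle
      push_neg at hle
      have : q * (k : ℝ) ≤ 0 :=
        mul_nonpos_of_nonneg_of_nonpos hq.le (by exact_mod_cast hle)
      linarith
    have hk2 : (k : ℤ) < 1 := by
      by_contra hle
      push_neg at hle
      have : q * 1 ≤ q * (k : ℝ) := by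
        apply mul_le_mul_of_nonneg_left _ hq.le
        exact_mod_cast hle
      linarith
    omega
  · obtain ⟨h1, h2⟩ := key (-β) h
    rw [inner_neg_right] at h1 h2
    rw [hk] at h1 h2
    have hk1 : (k : ℤ) < 0 := by
      by_contra hle
      push_neg at hle
      have : 0 ≤ q * (k : ℝ) := mul_nonneg hq.le (by exact_mod_cast hle)
      linarith
    have hk2 : (-1 : ℤ) < k := by
      by_contra hle
      push_neg at hle
      have : q * (k : ℝ) ≤ q * (-1) := by
        apply mul_le_mul_of_nonneg_left _ hq.le
        exact_mod_cast hle
      linarith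
    omega

lemma inT_offWalls_inA {q : ℝ} {x : V} (hT : InT RS q x) (hW : OffWalls RS q x) :
    InA RS q x := by
  constructor
  · intro i
    refine lt_of_le_of_ne (hT.1 i) (Ne.symm ?_)
    have := hW _ (RS.simpleRoot_mem i) 0
    simpa using this
  · refine lt_of_le_of_ne hT.2 ?_
    have := hW _ (theta_mem RS) 1
    simpa using this

/-! ### The symmetry `σ` of the dilated alcove -/

section Sigma

variable {q : ℝ} (hq : 0 < q) {u : V ≃ₗ[ℝ] V} (hu : u ∈ RS.weylGroup) {w₀ : V}
  (hw : ∀ β ∈ RS.Δ, ∃ k : ℤ, ⟪w₀, β⟫ = q * k)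

include hq hu hw

lemma sig_offWalls {x : V} (hx : OffWalls RS q x) : OffWalls RS q (u (x + w₀)) := by
  intro β hβ k hk
  rw [w_inner_symm RS hu, inner_add_left] at hk
  obtain ⟨k', hk'⟩ := hw _ (w_root_symm RS hu hβ)
  refine hx _ (w_root_symm RS hu hβ) (k - k') ?_
  rw [hk'] at hk
  push_cast
  linarith

lemma sig_inA {c' : V} (hc' : InA RS q c') (hanc : InA RS q (u (c' + w₀)))
    {a : V} (ha : InA RS q a) : InA RS q (u (a + w₀)) := by
  set y := u (c' + w₀) with hy
  have hzW : OffWalls RS q (u (a + w₀)) :=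
    sig_offWalls RS hq hu hw (inA_offWalls RS hq ha)
  set z := u (a + w₀) with hz
  -- convex combinations map through σ
  have hcomb : ∀ s : ℝ, 0 ≤ s → s ≤ 1 →
      u (((1 - s) • c' + s • a) + w₀) = (1 - s) • y + s • z := by
    intro s hs0 hs1
    have h : ((1 - s) • c' + s • a) + w₀ = (1 - s) • (c' + w₀) + s • (a + w₀) := by
      module
    rw [h, map_add, map_smul, map_smul]
  have hmid : ∀ s : ℝ, 0 < s → s < 1 → InA RS q ((1 - s) • c' + s • a) := by
    intro s hs0 hs1
    constructor
    · intro i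
      rw [inner_add_left, real_inner_smul_left, real_inner_smul_left]
      have := hc'.1 i
      have := ha.1 i
      nlinarith
    · rw [inner_add_left, real_inner_smul_left, real_inner_smul_left]
      have := hc'.2
      have := ha.2
      nlinarith
  constructor
  · intro i
    by_contra hle
    push_neg at hle
    have hne : ⟪z, RS.simpleRoot i⟫ ≠ 0 := by
      have := hzW _ (RS.simpleRoot_mem i) 0
      simpa using this
    have hf1 : ⟪z, RS.simpleRoot i⟫ < 0 := lt_of_le_of_ne hle hne
    set f0 := ⟪y, RS.simpleRoot i⟫ with hf0def
    have hf0 : 0 < f0 := hanc.1 i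
    set s := f0 / (f0 - ⟪z, RS.simpleRoot i⟫) with hsdef
    have hden : 0 < f0 - ⟪z, RS.simpleRoot i⟫ := by linarith
    have hs0 : 0 < s := div_pos hf0 hden
    have hs1 : s < 1 := by
      rw [hsdef, div_lt_one hden]
      linarith
    have hmmem := hmid s hs0 hs1
    have hwall := sig_offWalls RS hq hu hw (inA_offWalls RS hq hmmem)
    refine hwall _ (RS.simpleRoot_mem i) 0 ?_
    rw [hcomb s hs0.le hs1.le, inner_add_left, real_inner_smul_left, real_inner_smul_left]
    push_cast
    rw [mul_zero]
    have : s * (f0 - ⟪z, RS.simpleRoot i⟫) = f0 := by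
      rw [hsdef]
      field_simp
    nlinarith [this]
  · by_contra hle
    push_neg at hle
    have hne : ⟪z, RS.θ⟫ ≠ q := by
      have := hzW _ (theta_mem RS) 1
      simpa using this
    have hf1 : q < ⟪z, RS.θ⟫ := lt_of_le_of_ne hle (Ne.symm hne)
    set f0 := ⟪y, RS.θ⟫ with hf0def
    have hf0 : f0 < q := hanc.2
    set s := (q - f0) / (⟪z, RS.θ⟫ - f0) with hsdef
    have hden : 0 < ⟪z, RS.θ⟫ - f0 := by linarith
    have hs0 : 0 < s := div_pos (by linarith) hden
    have hs1 : s < 1 := by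
      rw [hsdef, div_lt_one hden]
      linarith
    have hmmem := hmid s hs0 hs1
    have hwall := sig_offWalls RS hq hu hw (inA_offWalls RS hq hmmem)
    refine hwall _ (theta_mem RS) 1 ?_
    rw [hcomb s hs0.le hs1.le, inner_add_left, real_inner_smul_left, real_inner_smul_left]
    push_cast
    rw [mul_one]
    have : s * (⟪z, RS.θ⟫ - f0) = q - f0 := by
      rw [hsdef]
      field_simp
    nlinarith [this]

lemma sig_inT {c' : V} (hc' : InA RS q c') (hanc : InA RS q (u (c' + w₀)))
    {a : V} (ha : InT RS q a) : InT RS q (u (a + w₀)) := by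
  set y := u (c' + w₀) with hy
  have hcomb : ∀ s : ℝ, u (((1 - s) • a + s • c') + w₀)
      = (1 - s) • u (a + w₀) + s • y := by
    intro s
    have h : ((1 - s) • a + s • c') + w₀ = (1 - s) • (a + w₀) + s • (c' + w₀) := by
      module
    rw [h, map_add, map_smul, map_smul]
  have hmidA : ∀ s : ℝ, 0 < s → s ≤ 1 → InA RS q ((1 - s) • a + s • c') := by
    intro s hs0 hs1
    constructor
    · intro i
      rw [inner_add_left, real_inner_smul_left, real_inner_smul_left]
      have h1 := ha.1 i
      have h2 := hc'.1 i
      nlinarith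
    · rw [inner_add_left, real_inner_smul_left, real_inner_smul_left]
      have h1 := ha.2
      have h2 := hc'.2
      nlinarith
  have himg : ∀ s : ℝ, 0 < s → s ≤ 1 → InA RS q ((1 - s) • u (a + w₀) + s • y) := by
    intro s hs0 hs1
    rw [← hcomb s]
    exact sig_inA RS hq hu hw hc' hanc (hmidA s hs0 hs1)
  constructor
  · intro i
    by_contra hle
    push_neg at hle
    set A := ⟪u (a + w₀), RS.simpleRoot i⟫ with hA
    set B := ⟪y, RS.simpleRoot i⟫ with hB
    have hBpos : 0 < B := hanc.1 i
    set s := (-A) / (B - A) with hsdef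
    have hden : 0 < B - A := by linarith
    have hs0 : 0 < s := div_pos (by linarith) hden
    have hs1 : s ≤ 1 := by
      rw [hsdef, div_le_one hden]
      linarith
    have := (himg s hs0 hs1).1 i
    rw [inner_add_left, real_inner_smul_left, real_inner_smul_left] at this
    have hval : s * (B - A) = -A := by
      rw [hsdef]
      field_simp
    nlinarith [this, hval]
  · by_contra hle
    push_neg at hle
    set A := ⟪u (a + w₀), RS.θ⟫ with hA
    set B := ⟪y, RS.θ⟫ with hB
    have hBlt : B < q := hanc.2
    set s := (A - q) / (A - B) with hsdef
    have hden : 0 < A - B := by linarith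
    have hs0 : 0 < s := div_pos (by linarith) hden
    have hs1 : s ≤ 1 := by
      rw [hsdef, div_le_one hden]
      linarith
    have := (himg s hs0 hs1).2
    rw [inner_add_left, real_inner_smul_left, real_inner_smul_left] at this
    have hval : s * (A - B) = A - q := by
      rw [hsdef]
      field_simp
    nlinarith [this, hval]

end Sigma

/-! ### An interior point of the dilated alcove -/

lemma exists_c {q : ℝ} (hq : 0 < q) {cf : Fin p → ℕ}
    (hθeq : RS.θ = ∑ i, (cf i : ℝ) • RS.simpleRoot i) :
    ∃ c : V, (∀ i, 0 < ⟪c, RS.simpleRoot i⟫) ∧ ⟪c, RS.θ⟫ < q := by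
  obtain ⟨z, hz⟩ := exists_dual RS (fun _ => 1)
  set C : ℝ := ∑ i, (cf i : ℝ) with hC
  have hC0 : 0 ≤ C := Finset.sum_nonneg fun i _ => Nat.cast_nonneg _
  refine ⟨(q / (C + 1)) • z, fun i => ?_, ?_⟩
  · rw [real_inner_smul_left, hz i, mul_one]
    positivity
  · have hzθ : ⟪z, RS.θ⟫ = C := by
      rw [hθeq, inner_sum, hC]
      refine Finset.sum_congr rfl fun i _ => ?_
      rw [real_inner_smul_right, hz i, mul_one]
    rw [real_inner_smul_left, hzθ, div_mul_eq_mul_div, div_lt_iff₀ (by linarith)]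
    nlinarith

/-! ### Choosing the translation class via coprimality -/

lemma L2 {g : ℕ} (hcop : Nat.Coprime (g + 1) RS.indexOfConnection) {ρ : V}
    (hρ : ρ ∈ RS.coweightLattice) :
    ∃ l ∈ RS.coweightLattice, (g + 1) • l + ρ ∈ RS.corootLattice := by
  classical
  set H := RS.corootLattice.addSubgroupOf RS.coweightLattice with hH
  set n := RS.indexOfConnection with hn
  have hindex : H.index = n := rfl
  set a : ℤ := Nat.gcdA (g + 1) n with ha
  set b : ℤ := Nat.gcdB (g + 1) n with hb
  have hbez : ((g : ℤ) + 1) * a + (n : ℤ) * b = 1 := by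
    have h := Nat.gcd_eq_gcd_ab (g + 1) n
    have h1 : Nat.gcd (g + 1) n = 1 := hcop
    rw [h1] at h
    push_cast at h ⊢
    rw [ha, hb]
    linarith [h]
  refine ⟨(-a) • ρ, zsmul_mem hρ _, ?_⟩
  set ρ' : ↥RS.coweightLattice := ⟨ρ, hρ⟩ with hρ'
  have hkey : (g + 1) • ((-a) • ρ') + ρ' ∈ H := by
    have hcoeff : ((g : ℤ) + 1) * (-a) + 1 = (n : ℤ) * b := by linarith [hbez]
    have hcalc : (g + 1) • ((-a) • ρ') + ρ' = b • ((n : ℤ) • ρ') := by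
      calc (g + 1) • ((-a) • ρ') + ρ'
          = (((g : ℤ) + 1) * (-a)) • ρ' + (1 : ℤ) • ρ' := by
            rw [one_zsmul, ← natCast_zsmul, smul_smul]
            norm_num
        _ = ((((g : ℤ) + 1) * (-a)) + 1) • ρ' := by rw [add_zsmul, one_zsmul]
        _ = ((n : ℤ) * b) • ρ' := by rw [hcoeff]
        _ = b • ((n : ℤ) • ρ') := by rw [smul_smul, mul_comm]
    rw [hcalc]
    refine zsmul_mem ?_ b
    have := AddSubgroup.nsmul_index_mem H ρ'
    rw [hindex] at this
    rw [natCast_zsmul]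
    exact this
  have hval := (AddSubgroup.mem_addSubgroupOf).mp hkey
  simpa using hval

end ST8


/-- Let `g` be the sum of the coefficients of the short simple roots in
`θ`, and `f` the index of connection. If `g + 1` and `f` are relatively prime, then some
element of the affine Weyl group `Ŵ` maps the simplex `D^(s)_min` onto the dilated closed
fundamental alcove `(g+1)·closure(A)`. -/
theorem statement8 {V : Type*} [NormedAddCommGroup V] [InnerProductSpace ℝ V] {p : ℕ}
    (RS : RootSystemData V p) (htwo : RS.TwoLengths)
    (g : ℕ) (hg : RS.IsShortCoeffSum g)
    (hcop : Nat.Coprime (g + 1) RS.indexOfConnection) :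
    ∃ v ∈ RS.weylGroup, ∃ r ∈ RS.corootLattice,
      affStar v r '' {x : V | (∀ i, RS.IsShort (RS.simpleRoot i) → -1 ≤ ⟪x, RS.simpleRoot i⟫) ∧
          (∀ i, ¬ RS.IsShort (RS.simpleRoot i) → 0 ≤ ⟪x, RS.simpleRoot i⟫) ∧
          ⟪x, RS.θ⟫ ≤ 1} =
        {x : V | (∀ i, 0 ≤ ⟪x, RS.simpleRoot i⟫) ∧ ⟪x, RS.θ⟫ ≤ (g : ℝ) + 1} := by
  classical
  obtain ⟨cf, hθeq, hgsum⟩ := hg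
  set q : ℝ := (g : ℝ) + 1 with hqdef
  have hq : 0 < q := by positivity
  have hqnat : q = ((g + 1 : ℕ) : ℝ) := by push_cast; rfl
  have hqsmul : ∀ z : V, q • z = (g + 1) • z := by
    intro z
    rw [hqnat, Nat.cast_smul_eq_nsmul]
  have hqP : ∀ r ∈ RS.corootLattice, q • r ∈ RS.coweightLattice := by
    intro r hr
    rw [hqsmul]
    exact nsmul_mem (ST8.coroot_le_coweight RS hr) _
  obtain ⟨c, hc1, hc2⟩ := ST8.exists_c RS hq hθeq
  have hcA : ST8.InA RS q c := ⟨hc1, hc2⟩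
  -- the vector ρ with (ρ, αᵢ) = 1 for short simple roots, 0 for long ones
  obtain ⟨ρ, hρ⟩ :=
    ST8.exists_dual RS (fun i => if RS.IsShort (RS.simpleRoot i) then (1 : ℝ) else 0)
  have hρP : ρ ∈ RS.coweightLattice := by
    intro α hα
    refine ST8.inner_int RS (fun i => ⟨if RS.IsShort (RS.simpleRoot i) then 1 else 0, ?_⟩) hα
    rw [hρ i]
    split <;> norm_num
  have hρθ : ⟪ρ, RS.θ⟫ = (g : ℝ) := by
    rw [hθeq, inner_sum, ← hgsum]
    push_cast
    refine Finset.sum_congr rfl fun i _ => ?_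
    rw [real_inner_smul_right, hρ i]
    split <;> norm_num
  obtain ⟨l, hlP, hlQ⟩ := ST8.L2 RS hcop hρP
  obtain ⟨u, hu, s₀, hs₀, hw1, hw2⟩ := ST8.descent RS q hq hqP hc1 hc2 (c + q • l)
  set w₀ : V := q • l + q • s₀ with hw₀def
  have hw : ∀ β ∈ RS.Δ, ∃ k : ℤ, ⟪w₀, β⟫ = q * k := by
    intro β hβ
    obtain ⟨k1, hk1⟩ := hlP β hβ
    obtain ⟨k2, hk2⟩ := ST8.coroot_le_coweight RS hs₀ β hβ
    refine ⟨k1 + k2, ?_⟩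
    rw [hw₀def, inner_add_left, real_inner_smul_left, real_inner_smul_left, hk1, hk2]
    push_cast
    ring
  have hancT : ST8.InT RS q (u (c + w₀)) := by
    have hpt : c + w₀ = c + q • l + q • s₀ := by rw [hw₀def]; abel
    rw [hpt]
    exact ⟨hw1, hw2⟩
  have hanc : ST8.InA RS q (u (c + w₀)) :=
    ST8.inT_offWalls_inA RS hancT
      (ST8.sig_offWalls RS hq hu hw (ST8.inA_offWalls RS hq hcA))
  refine ⟨u, hu, w₀ + ρ, ?_, ?_⟩
  · have h1 : q • l + ρ ∈ RS.corootLattice := by rw [hqsmul]; exact hlQ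
    have h2 : q • s₀ ∈ RS.corootLattice := by rw [hqsmul]; exact nsmul_mem hs₀ _
    have hsplit : w₀ + ρ = (q • l + ρ) + q • s₀ := by rw [hw₀def]; abel
    rw [hsplit]
    exact add_mem h1 h2
  · have himg : affStar u (w₀ + ρ) ''
        {x : V | (∀ i, RS.IsShort (RS.simpleRoot i) → -1 ≤ ⟪x, RS.simpleRoot i⟫) ∧
          (∀ i, ¬ RS.IsShort (RS.simpleRoot i) → 0 ≤ ⟪x, RS.simpleRoot i⟫) ∧ ⟪x, RS.θ⟫ ≤ 1}
        = (fun y => u (y + w₀)) '' ((fun x => x + ρ) ''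
          {x : V | (∀ i, RS.IsShort (RS.simpleRoot i) → -1 ≤ ⟪x, RS.simpleRoot i⟫) ∧
            (∀ i, ¬ RS.IsShort (RS.simpleRoot i) → 0 ≤ ⟪x, RS.simpleRoot i⟫) ∧
            ⟪x, RS.θ⟫ ≤ 1}) := by
      rw [Set.image_image]
      refine Set.image_congr fun x _ => ?_
      rw [affStar]
      congr 1
      abel
    have hDT : (fun x => x + ρ) ''
        {x : V | (∀ i, RS.IsShort (RS.simpleRoot i) → -1 ≤ ⟪x, RS.simpleRoot i⟫) ∧
          (∀ i, ¬ RS.IsShort (RS.simpleRoot i) → 0 ≤ ⟪x, RS.simpleRoot i⟫) ∧ ⟪x, RS.θ⟫ ≤ 1}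
        = {x : V | ST8.InT RS q x} := by
      ext y
      constructor
      · rintro ⟨x, ⟨hx1, hx2, hx3⟩, rfl⟩
        constructor
        · intro i
          rw [inner_add_left, hρ i]
          by_cases hi : RS.IsShort (RS.simpleRoot i)
          · rw [if_pos hi]; linarith [hx1 i hi]
          · rw [if_neg hi]; linarith [hx2 i hi]
        · rw [inner_add_left, hρθ, hqdef]
          linarith
      · intro hy
        refine ⟨y - ρ, ⟨?_, ?_, ?_⟩, by simp⟩
        · intro i hi
          have := hy.1 i
          rw [inner_sub_left, hρ i, if_pos hi]
          linarith
        · intro i hi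
          have := hy.1 i
          rw [inner_sub_left, hρ i, if_neg hi]
          linarith
        · have := hy.2
          rw [inner_sub_left, hρθ]
          rw [hqdef] at this
          linarith
    rw [himg, hDT]
    -- σ maps the dilated closed alcove onto itself
    have hu' : u.symm ∈ RS.weylGroup := inv_mem hu
    have hw' : ∀ β ∈ RS.Δ, ∃ k : ℤ, ⟪-(u w₀), β⟫ = q * k := by
      intro β hβ
      obtain ⟨k, hk⟩ := hw _ (ST8.w_root_symm RS hu hβ)
      refine ⟨-k, ?_⟩
      rw [inner_neg_left, ST8.w_inner_symm RS hu, hk]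
      push_cast
      ring
    have hcA' : ST8.InA RS q (u (c + w₀)) := hanc
    have hanc' : ST8.InA RS q (u.symm (u (c + w₀) + -(u w₀))) := by
      have : u (c + w₀) + -(u w₀) = u c := by rw [map_add]; abel
      rw [this, LinearEquiv.symm_apply_apply]
      exact hcA
    apply Set.Subset.antisymm
    · rintro _ ⟨a, ha, rfl⟩
      exact ST8.sig_inT RS hq hu hw hcA hanc ha
    · intro x hx
      refine ⟨u.symm (x + -(u w₀)), ?_, ?_⟩
      · exact ST8.sig_inT RS hq hu' hw' hcA' hanc' hx
      · show u (u.symm (x + -(u w₀)) + w₀) = x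
        rw [map_add, LinearEquiv.apply_symm_apply]
        abel
end
end

section
/- Let D^(s)_max = {x ∈ V : (x,α) ≤ 1 for α ∈ Π_s, (x,α) ≤ 0 for α ∈ Π_l, and (x,θ) ≥ 1}. Then: (1) an element w = v·t_r ∈ Ŵ is s-maximal if and only if w is dominant and v(r) ∈ D^(s)_max ∩ Q∨; (2) the map Ŵ^(s)_max → D^(s)_max ∩ Q∨ sending w = v·t_r to v(r) is a bijection. -/
open scoped RealInnerProductSpace
open Module

noncomputable section

variable {V : Type*} [NormedAddCommGroup V] [InnerProductSpace ℝ V]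

lemma sRefl_apply' (α x : V) : sRefl α x = x - (2 * ⟪α, x⟫ / ⟪α, α⟫) • α := rfl

lemma sRefl_symm_eq (α : V) : (sRefl α).symm = sRefl α := rfl

lemma sRefl_inv_eq (α : V) : (sRefl α)⁻¹ = sRefl α := rfl

lemma sRefl_sq (α : V) (x : V) : sRefl α (sRefl α x) = x := reflFun_involutive α x

lemma sRefl_inner (α x y : V) : ⟪sRefl α x, sRefl α y⟫ = ⟪x, y⟫ := by
  by_cases h : α = 0
  · simp [sRefl_apply', h]
  · have hs : ⟪α, α⟫ ≠ 0 := inner_self_ne_zero.mpr h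
    simp only [sRefl_apply', inner_sub_left, inner_sub_right, real_inner_smul_left,
      real_inner_smul_right]
    rw [real_inner_comm y α, real_inner_comm x α]
    field_simp
    ring

lemma sRefl_self (α : V) (h : α ≠ 0) : sRefl α α = -α := by
  have hs : ⟪α, α⟫ ≠ 0 := inner_self_ne_zero.mpr h
  rw [sRefl_apply']
  rw [show 2 * ⟪α, α⟫ / ⟪α, α⟫ = 2 by field_simp]
  module

lemma inner_self_pos' {x : V} (h : x ≠ 0) : (0:ℝ) < ⟪x, x⟫ :=
  lt_of_le_of_ne real_inner_self_nonneg (Ne.symm (inner_self_ne_zero.mpr h))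

lemma sRefl_neg (α : V) : sRefl (-α) = sRefl α := by
  ext x
  show reflFun (-α) x = reflFun α x
  simp only [reflFun, inner_neg_left, inner_neg_right, neg_neg, smul_neg]
  rw [show 2 * -⟪α, x⟫ / ⟪α, α⟫ = -(2 * ⟪α, x⟫ / ⟪α, α⟫) by ring, neg_smul, neg_neg]

lemma sRefl_congr_of_isometry (w : V ≃ₗ[ℝ] V) (hw : ∀ x y : V, ⟪w x, w y⟫ = ⟪x, y⟫)
    (α x : V) : sRefl (w α) (w x) = w (sRefl α x) := by
  simp only [sRefl_apply', hw, map_sub, map_smul]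

lemma sRefl_conj (w : V ≃ₗ[ℝ] V) (hw : ∀ x y : V, ⟪w x, w y⟫ = ⟪x, y⟫) (α : V) :
    sRefl (w α) = w * sRefl α * w⁻¹ := by
  ext x
  calc sRefl (w α) x = sRefl (w α) (w (w.symm x)) := by rw [w.apply_symm_apply]
    _ = w (sRefl α (w.symm x)) := sRefl_congr_of_isometry w hw α _
    _ = (w * sRefl α * w⁻¹) x := rfl

namespace RootSystemData

variable {p : ℕ} (RS : RootSystemData V p)

lemma pos_subset : RS.pos ⊆ RS.Δ := by
  rw [RS.pos_def]; exact fun α hα => hα.1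

lemma root_ne_zero {α : V} (hα : α ∈ RS.Δ) : α ≠ 0 := fun h => RS.zero_notMem (h ▸ hα)

lemma simpleRoot_mem_Δ (i : Fin p) : RS.simpleRoot i ∈ RS.Δ := RS.simpleRoot_mem i

include RS in
lemma finiteDim : FiniteDimensional ℝ V :=
  ⟨⟨RS.finite.toFinset, by rw [Set.Finite.coe_toFinset]; exact RS.span_eq_top⟩⟩

lemma span_simple_top : Submodule.span ℝ (Set.range RS.simpleRoot) = ⊤ := by
  haveI := RS.finiteDim
  have h := finrank_span_eq_card RS.simpleRoot_indep
  exact Submodule.eq_top_of_finrank_eq (by rw [h, Fintype.card_fin, RS.finrank_eq])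

/-- The simple roots as a basis of `V`. -/
noncomputable def basisP : Basis (Fin p) ℝ V :=
  Basis.mk RS.simpleRoot_indep (by rw [RS.span_simple_top])

lemma coe_basisP : ⇑RS.basisP = RS.simpleRoot := Basis.coe_mk _ _

/-- The `i`-th coordinate with respect to the simple-root basis. -/
noncomputable def coord (x : V) (i : Fin p) : ℝ := RS.basisP.repr x i

lemma coord_eq (x : V) (i : Fin p) : RS.coord x i = RS.basisP.coord i x := by
  rw [coord, Basis.coord_apply]

lemma coord_sum (c : Fin p → ℝ) (j : Fin p) :
    RS.coord (∑ i, c i • RS.simpleRoot i) j = c j := by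
  have : ∑ i, c i • RS.simpleRoot i = ∑ i, c i • RS.basisP i := by rw [RS.coe_basisP]
  rw [coord, this, Basis.repr_sum_self]

lemma eq_sum_coord (x : V) : x = ∑ i, RS.coord x i • RS.simpleRoot i := by
  conv_lhs => rw [← RS.basisP.sum_repr x]
  rw [coe_basisP]
  rfl

lemma coord_add (x y : V) (i : Fin p) :
    RS.coord (x + y) i = RS.coord x i + RS.coord y i := by
  simp only [coord_eq, map_add]

lemma coord_neg (x : V) (i : Fin p) : RS.coord (-x) i = -RS.coord x i := by
  simp only [coord_eq, map_neg]

lemma coord_sub (x y : V) (i : Fin p) :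
    RS.coord (x - y) i = RS.coord x i - RS.coord y i := by
  simp only [coord_eq, map_sub]

lemma coord_smul (c : ℝ) (x : V) (i : Fin p) : RS.coord (c • x) i = c * RS.coord x i := by
  simp only [coord_eq, map_smul, smul_eq_mul]

lemma coord_finset_sum {ι : Type*} (s : Finset ι) (f : ι → V) (i : Fin p) :
    RS.coord (∑ k ∈ s, f k) i = ∑ k ∈ s, RS.coord (f k) i := by
  simp only [coord_eq]
  exact map_sum (RS.basisP.coord i) f s

lemma coord_simpleRoot (i j : Fin p) :
    RS.coord (RS.simpleRoot i) j = if j = i then 1 else 0 := by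
  rw [coord, ← RS.coe_basisP, Basis.repr_self]
  simp [Finsupp.single_apply, eq_comm]

lemma eq_zero_of_coord_zero (x : V) (h : ∀ i, RS.coord x i = 0) : x = 0 := by
  have := RS.eq_sum_coord x
  simp only [h, zero_smul, Finset.sum_const_zero] at this
  exact this

lemma mem_pos_iff {α : V} : α ∈ RS.pos ↔
    α ∈ RS.Δ ∧ ∃ c : Fin p → ℕ, α = ∑ i, (c i : ℝ) • RS.simpleRoot i := by
  rw [RS.pos_def]; exact Iff.rfl

lemma coord_nat_of_pos {α : V} (hα : α ∈ RS.pos) :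
    ∃ c : Fin p → ℕ, ∀ i, RS.coord α i = c i := by
  obtain ⟨-, c, hc⟩ := RS.mem_pos_iff.mp hα
  exact ⟨c, fun i => by rw [hc, RS.coord_sum]⟩

lemma coord_nonneg_of_pos {α : V} (hα : α ∈ RS.pos) (i : Fin p) : 0 ≤ RS.coord α i := by
  obtain ⟨c, hc⟩ := RS.coord_nat_of_pos hα
  rw [hc]
  exact Nat.cast_nonneg _

lemma not_neg_mem_pos {α : V} (hα : α ∈ RS.pos) : -α ∉ RS.pos := by
  intro h
  have h0 : α = 0 := by
    apply RS.eq_zero_of_coord_zero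
    intro i
    have h1 := RS.coord_nonneg_of_pos hα i
    have h2 := RS.coord_nonneg_of_pos h i
    rw [RS.coord_neg] at h2
    linarith
  exact RS.root_ne_zero (RS.pos_subset hα) h0

lemma mem_pos_of_coord_nonneg {α : V} (hα : α ∈ RS.Δ) (h : ∀ i, 0 ≤ RS.coord α i) :
    α ∈ RS.pos := by
  rcases RS.pos_or_neg α hα with hp | hp
  · exact hp
  · exfalso
    have h0 : α = 0 := by
      apply RS.eq_zero_of_coord_zero
      intro i
      have h2 := RS.coord_nonneg_of_pos hp i
      rw [RS.coord_neg] at h2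
      linarith [h i]
    exact RS.root_ne_zero hα h0

lemma mem_pos_of_coord_pos {α : V} (hα : α ∈ RS.Δ) {j : Fin p}
    (h : 0 < RS.coord α j) : α ∈ RS.pos := by
  rcases RS.pos_or_neg α hα with hp | hp
  · exact hp
  · exfalso
    have h2 := RS.coord_nonneg_of_pos hp j
    rw [RS.coord_neg] at h2
    linarith

lemma simpleRoot_mem_pos (i : Fin p) : RS.simpleRoot i ∈ RS.pos :=
  RS.mem_pos_of_coord_pos (RS.simpleRoot_mem i)
    (j := i) (by rw [RS.coord_simpleRoot]; simp)

lemma mem_Δ_dichotomy {α : V} (hα : α ∈ RS.Δ) : α ∈ RS.pos ∨ (-α ∈ RS.pos ∧ α ∉ RS.pos) := by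
  rcases RS.pos_or_neg α hα with hp | hp
  · exact Or.inl hp
  · by_cases h : α ∈ RS.pos
    · exact Or.inl h
    · exact Or.inr ⟨hp, h⟩

/-- The Cartan integer decomposition of a reflection of one root in another. -/
lemma sRefl_root_decomp {α β : V} (hα : α ∈ RS.Δ) (hβ : β ∈ RS.Δ) :
    ∃ n : ℤ, sRefl α β = β - (n : ℝ) • α ∧ 2 * ⟪α, β⟫ / ⟪α, α⟫ = (n : ℝ) := by
  obtain ⟨n, hn⟩ := RS.crystallographic α hα β hβ
  exact ⟨n, by rw [sRefl_apply', hn], hn⟩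

lemma sRefl_simple_perm (i : Fin p) {β : V} (hβ : β ∈ RS.pos)
    (hne : β ≠ RS.simpleRoot i) :
    sRefl (RS.simpleRoot i) β ∈ RS.pos ∧ sRefl (RS.simpleRoot i) β ≠ RS.simpleRoot i := by
  set αi := RS.simpleRoot i with hαi
  have hαiΔ : αi ∈ RS.Δ := RS.simpleRoot_mem i
  have hβΔ : β ∈ RS.Δ := RS.pos_subset hβ
  have hsΔ : sRefl αi β ∈ RS.Δ := RS.reflect_mem αi hαiΔ β hβΔ
  obtain ⟨n, hdec, -⟩ := RS.sRefl_root_decomp hαiΔ hβΔ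
  -- find j ≠ i with positive coordinate
  have hj : ∃ j, j ≠ i ∧ 0 < RS.coord β j := by
    by_contra hcon
    push_neg at hcon
    have hco : ∀ j, j ≠ i → RS.coord β j = 0 := fun j hj =>
      le_antisymm (hcon j hj) (RS.coord_nonneg_of_pos hβ j)
    have hβeq : β = RS.coord β i • αi := by
      conv_lhs => rw [RS.eq_sum_coord β]
      rw [Finset.sum_eq_single i]
      · intro b _ hb; rw [hco b hb, zero_smul]
      · intro h; exact absurd (Finset.mem_univ i) h
    rcases RS.reduced αi hαiΔ (RS.coord β i) (by rw [← hβeq]; exact hβΔ) with h1 | h1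
    · rw [h1, one_smul] at hβeq; exact hne hβeq
    · rw [h1] at hβeq
      have : -β ∈ RS.pos := by
        rw [hβeq]; simpa using RS.simpleRoot_mem_pos i
      exact RS.not_neg_mem_pos hβ this
  obtain ⟨j, hji, hjpos⟩ := hj
  have hcoordj : RS.coord (sRefl αi β) j = RS.coord β j := by
    rw [hdec, RS.coord_sub, RS.coord_smul, RS.coord_simpleRoot, if_neg hji, mul_zero, sub_zero]
  have hspos : sRefl αi β ∈ RS.pos :=
    RS.mem_pos_of_coord_pos hsΔ (j := j) (by rw [hcoordj]; exact hjpos)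
  refine ⟨hspos, fun h => ?_⟩
  have : β = -αi := by
    have := congrArg (sRefl αi) h
    rw [sRefl_sq, sRefl_self αi (RS.root_ne_zero hαiΔ)] at this
    exact this
  rw [this] at hβ
  exact RS.not_neg_mem_pos (RS.simpleRoot_mem_pos i) (by simpa using hβ)

end RootSystemData

namespace RootSystemData

variable {p : ℕ} (RS : RootSystemData V p)

lemma linearEquiv_inv_apply (a : V ≃ₗ[ℝ] V) (x : V) : a⁻¹ x = a.symm x := rfl

lemma weyl_inner {w : V ≃ₗ[ℝ] V} (hw : w ∈ RS.weylGroup) (x y : V) :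
    ⟪w x, w y⟫ = ⟪x, y⟫ := by
  revert x y
  refine Subgroup.closure_induction (fun g hg => ?_) (fun x y => rfl) ?_ ?_ hw
  · obtain ⟨α, -, rfl⟩ := hg
    exact fun x y => sRefl_inner α x y
  · intro a b _ _ iha ihb x y
    have : (a * b) x = a (b x) := rfl
    rw [this, show (a * b) y = a (b y) from rfl, iha, ihb]
  · intro a _ ih x y
    have h := ih (a⁻¹ x) (a⁻¹ y)
    rw [linearEquiv_inv_apply, linearEquiv_inv_apply, a.apply_symm_apply,
      a.apply_symm_apply] at h
    exact h.symm

lemma weyl_maps_root {w : V ≃ₗ[ℝ] V} (hw : w ∈ RS.weylGroup) :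
    ∀ α ∈ RS.Δ, w α ∈ RS.Δ ∧ w⁻¹ α ∈ RS.Δ := by
  refine Subgroup.closure_induction (fun g hg => ?_) (fun α hα => ⟨hα, hα⟩) ?_ ?_ hw
  · obtain ⟨β, hβ, rfl⟩ := hg
    intro α hα
    refine ⟨RS.reflect_mem β hβ α hα, ?_⟩
    rw [linearEquiv_inv_apply, sRefl_symm_eq]
    exact RS.reflect_mem β hβ α hα
  · intro a b _ _ iha ihb α hα
    refine ⟨(iha _ (ihb α hα).1).1, ?_⟩
    have : (a * b)⁻¹ α = b⁻¹ (a⁻¹ α) := rfl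
    rw [this]
    exact (ihb _ (iha α hα).2).2
  · intro a _ ih α hα
    exact ⟨(ih α hα).2, by rw [inv_inv]; exact (ih α hα).1⟩

lemma weyl_maps_root' {w : V ≃ₗ[ℝ] V} (hw : w ∈ RS.weylGroup) {α : V} (hα : α ∈ RS.Δ) :
    w α ∈ RS.Δ := (RS.weyl_maps_root hw α hα).1

lemma weyl_symm_maps_root {w : V ≃ₗ[ℝ] V} (hw : w ∈ RS.weylGroup) {α : V}
    (hα : α ∈ RS.Δ) : w.symm α ∈ RS.Δ := (RS.weyl_maps_root hw α hα).2

lemma weyl_maps_corootLattice {w : V ≃ₗ[ℝ] V} (hw : w ∈ RS.weylGroup) {x : V}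
    (hx : x ∈ RS.corootLattice) : w x ∈ RS.corootLattice := by
  refine AddSubgroup.closure_induction (fun y hy => ?_) (by rw [map_zero]; exact AddSubgroup.zero_mem _) ?_ ?_ hx
  · obtain ⟨β, hβ, rfl⟩ := hy
    have h1 : w (corootVec β) = corootVec (w β) := by
      simp only [corootVec, map_smul, RS.weyl_inner hw]
    rw [h1]
    exact AddSubgroup.subset_closure ⟨w β, RS.weyl_maps_root' hw hβ, rfl⟩
  · intro a b _ _ iha ihb
    rw [map_add]
    exact AddSubgroup.add_mem _ iha ihb
  · intro a _ iha
    rw [map_neg]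
    exact AddSubgroup.neg_mem _ iha

lemma sRefl_mem_weyl {α : V} (hα : α ∈ RS.Δ) : sRefl α ∈ RS.weylGroup :=
  Subgroup.subset_closure ⟨α, hα, rfl⟩

end RootSystemData

namespace RootSystemData

variable {p : ℕ} (RS : RootSystemData V p)

/-- The product of simple reflections indexed by a word. -/
noncomputable def prodWord (l : List (Fin p)) : V ≃ₗ[ℝ] V :=
  (l.map fun i => sRefl (RS.simpleRoot i)).prod

lemma prodWord_nil : RS.prodWord [] = 1 := rfl

lemma prodWord_cons (j : Fin p) (m : List (Fin p)) :
    RS.prodWord (j :: m) = sRefl (RS.simpleRoot j) * RS.prodWord m := by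
  simp [prodWord]

lemma prodWord_append (l m : List (Fin p)) :
    RS.prodWord (l ++ m) = RS.prodWord l * RS.prodWord m := by
  simp [prodWord]

lemma sRefl_mul_self (α : V) : sRefl α * sRefl α = 1 := by
  ext x
  exact sRefl_sq α x

lemma prodWord_mem_weyl (l : List (Fin p)) : RS.prodWord l ∈ RS.weylGroup := by
  induction l with
  | nil => exact one_mem _
  | cons j m ih =>
    rw [prodWord_cons]
    exact mul_mem (RS.sRefl_mem_weyl (RS.simpleRoot_mem j)) ih

lemma prodWord_inv (l : List (Fin p)) : (RS.prodWord l)⁻¹ = RS.prodWord l.reverse := by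
  induction l with
  | nil => simp [prodWord_nil]
  | cons j m ih =>
    rw [prodWord_cons, mul_inv_rev, ih, sRefl_inv_eq, List.reverse_cons, prodWord_append,
      show RS.prodWord [j] = sRefl (RS.simpleRoot j) * 1 from prodWord_cons RS j [],
      mul_one]

lemma exists_word_of_pos_aux (n : ℕ) : ∀ β ∈ RS.pos, ∀ c : Fin p → ℕ,
    (∀ i, RS.coord β i = c i) → ∑ i, c i = n →
    ∃ (l : List (Fin p)) (i : Fin p), β = RS.prodWord l (RS.simpleRoot i) := by
  induction n using Nat.strong_induction_on with
  | _ n ih =>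
  intro β hβ c hc hsum
  by_cases hsimp : ∃ i, β = RS.simpleRoot i
  · obtain ⟨i, rfl⟩ := hsimp
    exact ⟨[], i, rfl⟩
  · push_neg at hsimp
    have hβΔ : β ∈ RS.Δ := RS.pos_subset hβ
    have hββ : (0:ℝ) < ⟪β, β⟫ := inner_self_pos' (RS.root_ne_zero hβΔ)
    have hi : ∃ i, 0 < ⟪RS.simpleRoot i, β⟫ := by
      by_contra hcon
      push_neg at hcon
      have h00 : ⟪β, β⟫ = ⟪(∑ i, RS.coord β i • RS.simpleRoot i : V), β⟫ := by
        rw [← RS.eq_sum_coord β]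
      have : ⟪β, β⟫ = ∑ i, RS.coord β i * ⟪RS.simpleRoot i, β⟫ := by
        rw [h00, sum_inner]
        exact Finset.sum_congr rfl fun i _ => real_inner_smul_left _ _ _
      have hle : ⟪β, β⟫ ≤ 0 := by
        rw [this]
        apply Finset.sum_nonpos
        intro i _
        exact mul_nonpos_of_nonneg_of_nonpos (RS.coord_nonneg_of_pos hβ i) (hcon i)
      linarith
    obtain ⟨i, hip⟩ := hi
    have hαiΔ : RS.simpleRoot i ∈ RS.Δ := RS.simpleRoot_mem i
    have hne : β ≠ RS.simpleRoot i := hsimp i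
    obtain ⟨hspos, -⟩ := RS.sRefl_simple_perm i hβ hne
    obtain ⟨nint, hdec, hval⟩ := RS.sRefl_root_decomp hαiΔ hβΔ
    have hαα : (0:ℝ) < ⟪RS.simpleRoot i, RS.simpleRoot i⟫ :=
      inner_self_pos' (RS.root_ne_zero hαiΔ)
    have hnpos : (0:ℝ) < (nint : ℝ) := by
      rw [← hval]
      exact div_pos (by linarith) hαα
    have hn1 : (1:ℝ) ≤ (nint : ℝ) := by
      exact_mod_cast Int.cast_pos.mp hnpos
    obtain ⟨c', hc'⟩ := RS.coord_nat_of_pos hspos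
    have hsumc' : ((∑ j, c' j : ℕ) : ℝ) = ((∑ j, c j : ℕ) : ℝ) - (nint : ℝ) := by
      push_cast
      have h1 : ∀ j, (c' j : ℝ) = RS.coord β j - (nint : ℝ) * RS.coord (RS.simpleRoot i) j := by
        intro j
        rw [← hc' j, hdec, RS.coord_sub, RS.coord_smul]
      have h2 : ∑ j, (RS.coord (RS.simpleRoot i) j) = 1 := by
        have : ∀ j, RS.coord (RS.simpleRoot i) j = if j = i then 1 else 0 := fun j => by
          rw [RS.coord_simpleRoot]
        simp [this]
      calc ∑ j, (c' j : ℝ) = ∑ j, (RS.coord β j - (nint:ℝ) * RS.coord (RS.simpleRoot i) j) :=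
            Finset.sum_congr rfl fun j _ => h1 j
        _ = ∑ j, RS.coord β j - (nint:ℝ) * ∑ j, RS.coord (RS.simpleRoot i) j := by
            rw [Finset.sum_sub_distrib, Finset.mul_sum]
        _ = ∑ j, (c j : ℝ) - (nint : ℝ) := by
            rw [h2, mul_one]
            congr 1
            exact Finset.sum_congr rfl fun j _ => hc j
    have hlt : (∑ j, c' j) < n := by
      have : ((∑ j, c' j : ℕ) : ℝ) < ((∑ j, c j : ℕ) : ℝ) := by
        rw [hsumc']; linarith
      rw [← hsum]
      exact_mod_cast this
    obtain ⟨l, k, hlk⟩ := ih (∑ j, c' j) hlt (sRefl (RS.simpleRoot i) β) hspos c'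
      (fun j => hc' j) rfl
    refine ⟨i :: l, k, ?_⟩
    rw [prodWord_cons]
    have : (sRefl (RS.simpleRoot i) * RS.prodWord l) (RS.simpleRoot k)
        = sRefl (RS.simpleRoot i) (RS.prodWord l (RS.simpleRoot k)) := rfl
    rw [this, ← hlk, sRefl_sq]

lemma exists_word_of_pos {β : V} (hβ : β ∈ RS.pos) :
    ∃ (l : List (Fin p)) (i : Fin p), β = RS.prodWord l (RS.simpleRoot i) := by
  obtain ⟨c, hc⟩ := RS.coord_nat_of_pos hβ
  exact RS.exists_word_of_pos_aux (∑ i, c i) β hβ c hc rfl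

lemma exists_word {w : V ≃ₗ[ℝ] V} (hw : w ∈ RS.weylGroup) :
    ∃ l : List (Fin p), w = RS.prodWord l := by
  refine Subgroup.closure_induction (fun g hg => ?_) ⟨[], rfl⟩ ?_ ?_ hw
  · obtain ⟨α, hα, rfl⟩ := hg
    have key : ∀ α' ∈ RS.pos, ∃ l : List (Fin p), sRefl α' = RS.prodWord l := by
      intro α' hα'
      obtain ⟨l, i, hl⟩ := RS.exists_word_of_pos hα'
      have hiso := RS.weyl_inner (RS.prodWord_mem_weyl l)
      have : sRefl α' = RS.prodWord l * sRefl (RS.simpleRoot i) * (RS.prodWord l)⁻¹ := by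
        rw [hl]
        exact sRefl_conj (RS.prodWord l) hiso (RS.simpleRoot i)
      refine ⟨l ++ [i] ++ l.reverse, ?_⟩
      have hP : RS.prodWord (l ++ [i] ++ l.reverse)
          = RS.prodWord l * sRefl (RS.simpleRoot i) * RS.prodWord l.reverse := by
        rw [prodWord_append, prodWord_append,
          show RS.prodWord [i] = sRefl (RS.simpleRoot i) * 1 from prodWord_cons RS i [],
          mul_one]
      rw [this, hP, RS.prodWord_inv]
    rcases RS.mem_Δ_dichotomy hα with hpos | ⟨hneg, -⟩
    · exact key α hpos
    · obtain ⟨l, hl⟩ := key (-α) hneg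
      exact ⟨l, by rw [← hl, sRefl_neg]⟩
  · rintro a b _ _ ⟨la, rfl⟩ ⟨lb, rfl⟩
    exact ⟨la ++ lb, (RS.prodWord_append la lb).symm⟩
  · rintro a _ ⟨la, rfl⟩
    exact ⟨la.reverse, RS.prodWord_inv la⟩

lemma prodWord_maps_root (l : List (Fin p)) {α : V} (hα : α ∈ RS.Δ) :
    RS.prodWord l α ∈ RS.Δ :=
  RS.weyl_maps_root' (RS.prodWord_mem_weyl l) hα

lemma exchange (l : List (Fin p)) (k : Fin p)
    (h : -(RS.prodWord l (RS.simpleRoot k)) ∈ RS.pos) :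
    ∃ l' : List (Fin p), l'.length + 2 = l.length + 1 ∧
      RS.prodWord (l ++ [k]) = RS.prodWord l' := by
  induction l with
  | nil =>
    exfalso
    rw [prodWord_nil] at h
    exact RS.not_neg_mem_pos (RS.simpleRoot_mem_pos k) h
  | cons j m ihm =>
    by_cases hβn : -(RS.prodWord m (RS.simpleRoot k)) ∈ RS.pos
    · obtain ⟨m', hlen, heq⟩ := ihm hβn
      refine ⟨j :: m', by simpa using by omega, ?_⟩
      have h1 : (j::m) ++ [k] = j :: (m ++ [k]) := rfl
      rw [h1, prodWord_cons, heq, ← prodWord_cons]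
    · set β := RS.prodWord m (RS.simpleRoot k) with hβdef
      have hβΔ : β ∈ RS.Δ := RS.prodWord_maps_root m (RS.simpleRoot_mem k)
      have hβpos : β ∈ RS.pos := by
        rcases RS.mem_Δ_dichotomy hβΔ with hp | ⟨hp, -⟩
        · exact hp
        · exact absurd hp hβn
      have hsj : RS.prodWord (j :: m) (RS.simpleRoot k) = sRefl (RS.simpleRoot j) β := by
        rw [prodWord_cons]; rfl
      have hs : sRefl (RS.simpleRoot j) β ∉ RS.pos := by
        intro hcon
        rw [hsj] at h
        exact RS.not_neg_mem_pos hcon h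
      have hb : β = RS.simpleRoot j := by
        by_contra hne
        exact hs (RS.sRefl_simple_perm j hβpos hne).1
      have hconj : sRefl (RS.simpleRoot j) * RS.prodWord m
          = RS.prodWord m * sRefl (RS.simpleRoot k) := by
        have hiso := RS.weyl_inner (RS.prodWord_mem_weyl m)
        have h1 : sRefl (RS.simpleRoot j)
            = RS.prodWord m * sRefl (RS.simpleRoot k) * (RS.prodWord m)⁻¹ := by
          rw [← hb, hβdef]
          exact sRefl_conj (RS.prodWord m) hiso (RS.simpleRoot k)
        rw [h1]
        group
      refine ⟨m, by simp, ?_⟩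
      have h1 : (j::m) ++ [k] = j :: (m ++ [k]) := rfl
      rw [h1, prodWord_cons, prodWord_append,
        show RS.prodWord [k] = sRefl (RS.simpleRoot k) * 1 from prodWord_cons RS k [],
        mul_one, ← mul_assoc, hconj, mul_assoc, sRefl_mul_self, mul_one]

lemma eq_one_of_fix_pos {w : V ≃ₗ[ℝ] V} (hw : w ∈ RS.weylGroup)
    (hp : ∀ α ∈ RS.pos, w α ∈ RS.pos) : w = 1 := by
  have hne : {n : ℕ | ∃ l : List (Fin p), l.length = n ∧ w = RS.prodWord l}.Nonempty := by
    obtain ⟨l, hl⟩ := RS.exists_word hw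
    exact ⟨l.length, l, rfl, hl⟩
  obtain ⟨l, hlen, hweq⟩ := Nat.sInf_mem hne
  rcases List.eq_nil_or_concat l with rfl | ⟨l₀, k, rfl⟩
  · exact hweq
  · exfalso
    simp only [List.concat_eq_append] at hlen hweq
    have hpk : w (RS.simpleRoot k) ∈ RS.pos := hp _ (RS.simpleRoot_mem_pos k)
    have hcalc : w (RS.simpleRoot k) = -(RS.prodWord l₀ (RS.simpleRoot k)) := by
      rw [hweq, prodWord_append,
        show RS.prodWord [k] = sRefl (RS.simpleRoot k) * 1 from prodWord_cons RS k [],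
        mul_one]
      have h1 : (RS.prodWord l₀ * sRefl (RS.simpleRoot k)) (RS.simpleRoot k)
          = RS.prodWord l₀ (sRefl (RS.simpleRoot k) (RS.simpleRoot k)) := rfl
      rw [h1, sRefl_self _ (RS.root_ne_zero (RS.simpleRoot_mem k)), map_neg]
    obtain ⟨l', hlen', heq'⟩ := RS.exchange l₀ k (by rw [← hcalc]; exact hpk)
    have hmem : l'.length ∈ {n : ℕ | ∃ l : List (Fin p), l.length = n ∧ w = RS.prodWord l} :=
      ⟨l', rfl, by rw [hweq, heq']⟩
    have hge := Nat.sInf_le hmem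
    simp only [List.length_append, List.length_singleton] at hlen
    omega

end RootSystemData

namespace RootSystemData

variable {p : ℕ} (RS : RootSystemData V p)

lemma pos_finite : RS.pos.Finite := RS.finite.subset RS.pos_subset

lemma count_img (P : V → Prop) (v : V ≃ₗ[ℝ] V) (i : Fin p)
    (hnot : ¬ P (-(v (RS.simpleRoot i)))) :
    {α ∈ RS.pos | P (v (sRefl (RS.simpleRoot i) α))}
      = sRefl (RS.simpleRoot i) '' ({α ∈ RS.pos | P (v α)} \ {RS.simpleRoot i}) := by
  ext α
  constructor
  · rintro ⟨hαpos, hPα⟩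
    have hαne : α ≠ RS.simpleRoot i := by
      rintro rfl
      rw [sRefl_self _ (RS.root_ne_zero (RS.simpleRoot_mem i)), map_neg] at hPα
      exact hnot hPα
    obtain ⟨hspos, hsne⟩ := RS.sRefl_simple_perm i hαpos hαne
    exact ⟨sRefl (RS.simpleRoot i) α, ⟨⟨hspos, hPα⟩, hsne⟩, sRefl_sq _ _⟩
  · rintro ⟨β, ⟨⟨hβpos, hPβ⟩, hβne⟩, rfl⟩
    have hβne' : β ≠ RS.simpleRoot i := fun h => hβne h
    obtain ⟨hspos, -⟩ := RS.sRefl_simple_perm i hβpos hβne'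
    exact ⟨hspos, by rw [sRefl_sq]; exact hPβ⟩

lemma count_move_pos (P : V → Prop) (v : V ≃ₗ[ℝ] V) (i : Fin p)
    (hnot : ¬ P (-(v (RS.simpleRoot i)))) (hP : P (v (RS.simpleRoot i))) :
    {α ∈ RS.pos | P (v (sRefl (RS.simpleRoot i) α))}.ncard + 1
      = {α ∈ RS.pos | P (v α)}.ncard := by
  rw [RS.count_img P v i hnot,
    Set.ncard_image_of_injective _ (sRefl (RS.simpleRoot i)).injective]
  exact Set.ncard_diff_singleton_add_one ⟨RS.simpleRoot_mem_pos i, hP⟩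
    (RS.pos_finite.subset fun x hx => hx.1)

lemma count_move_eq (P : V → Prop) (v : V ≃ₗ[ℝ] V) (i : Fin p)
    (hnot : ¬ P (-(v (RS.simpleRoot i)))) (hP : ¬ P (v (RS.simpleRoot i))) :
    {α ∈ RS.pos | P (v (sRefl (RS.simpleRoot i) α))}.ncard
      = {α ∈ RS.pos | P (v α)}.ncard := by
  rw [RS.count_img P v i hnot,
    Set.ncard_image_of_injective _ (sRefl (RS.simpleRoot i)).injective,
    Set.diff_singleton_eq_self (fun h => hP h.2)]

/-- The target set for images of positive roots under a dominant `w = v·t_r`. -/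
def Sset (q : V) : Set V :=
  {β : V | β ∈ RS.Δ ∧ (⟪β, q⟫ < 0 ∨ (⟪β, q⟫ = 0 ∧ β ∈ RS.pos))}

lemma neg_not_mem_Sset {q β : V} (hβ : β ∈ RS.Sset q) : -β ∉ RS.Sset q := by
  rintro ⟨-, hcond⟩
  obtain ⟨-, hc⟩ := hβ
  rcases hc with h1 | ⟨h1, h2⟩
  · rcases hcond with h3 | ⟨h3, -⟩
    · rw [inner_neg_left] at h3; linarith
    · rw [inner_neg_left] at h3; linarith
  · rcases hcond with h3 | ⟨-, h4⟩
    · rw [inner_neg_left, h1, neg_zero] at h3; exact lt_irrefl _ h3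
    · exact RS.not_neg_mem_pos h2 h4

lemma dominant_simple_mem_Sset {v : V ≃ₗ[ℝ] V} {r : V} (hd : RS.IsDominantPair v r)
    (i : Fin p) : v (RS.simpleRoot i) ∈ RS.Sset (v r) := by
  obtain ⟨hvW, -, hdom⟩ := hd
  have h := hdom i
  obtain ⟨hΔ, hcond⟩ := h
  have hinner : ⟪RS.simpleRoot i, r⟫ = ⟪v (RS.simpleRoot i), v r⟫ :=
    (RS.weyl_inner hvW _ _).symm
  refine ⟨hΔ, ?_⟩
  rcases hcond with h1 | ⟨h1, h2⟩
  · left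
    have : (0:ℝ) < 0 - ⟪RS.simpleRoot i, r⟫ := h1
    rw [hinner] at this; linarith
  · right
    have : (0:ℝ) - ⟪RS.simpleRoot i, r⟫ = 0 := h1
    rw [hinner] at this
    exact ⟨by linarith, h2⟩

lemma dominant_maps_pos {v : V ≃ₗ[ℝ] V} {r : V} (hd : RS.IsDominantPair v r)
    {α : V} (hα : α ∈ RS.pos) : v α ∈ RS.Sset (v r) := by
  set q := v r
  have hvW := hd.1
  obtain ⟨hαΔ, c, hc⟩ := RS.mem_pos_iff.mp hα
  have hvαΔ : v α ∈ RS.Δ := RS.weyl_maps_root' hvW hαΔ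
  have hexp : v α = ∑ i, (c i : ℝ) • v (RS.simpleRoot i) := by
    rw [hc, map_sum]
    exact Finset.sum_congr rfl fun i _ => by rw [map_smul]
  have hin : ⟪v α, q⟫ = ∑ i, (c i : ℝ) * ⟪v (RS.simpleRoot i), q⟫ := by
    rw [hexp, sum_inner]
    exact Finset.sum_congr rfl fun i _ => real_inner_smul_left _ _ _
  have hterm : ∀ i, ⟪v (RS.simpleRoot i), q⟫ < 0
      ∨ (⟪v (RS.simpleRoot i), q⟫ = 0 ∧ v (RS.simpleRoot i) ∈ RS.pos) :=
    fun i => (RS.dominant_simple_mem_Sset hd i).2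
  have htermle : ∀ i, (c i : ℝ) * ⟪v (RS.simpleRoot i), q⟫ ≤ 0 := fun i => by
    rcases hterm i with h | ⟨h, -⟩
    · exact mul_nonpos_of_nonneg_of_nonpos (Nat.cast_nonneg _) h.le
    · rw [h, mul_zero]
  have hle : ⟪v α, q⟫ ≤ 0 := by
    rw [hin]; exact Finset.sum_nonpos fun i _ => htermle i
  refine ⟨hvαΔ, ?_⟩
  rcases lt_or_eq_of_le hle with hlt | heq
  · exact Or.inl hlt
  · right
    refine ⟨heq, ?_⟩
    have hzero : ∀ i ∈ Finset.univ, (c i : ℝ) * ⟪v (RS.simpleRoot i), q⟫ = 0 := by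
      exact (Finset.sum_eq_zero_iff_of_nonpos (fun i _ => htermle i)).mp
        (by rw [← hin]; exact heq)
    apply RS.mem_pos_of_coord_nonneg hvαΔ
    intro j
    have hcoord : RS.coord (v α) j = ∑ i, (c i : ℝ) * RS.coord (v (RS.simpleRoot i)) j := by
      rw [hexp, RS.coord_finset_sum]
      exact Finset.sum_congr rfl fun i _ => RS.coord_smul _ _ _
    rw [hcoord]
    apply Finset.sum_nonneg
    intro i _
    rcases Nat.eq_zero_or_pos (c i) with hci | hci
    · rw [hci]; simp
    · have hiz := hzero i (Finset.mem_univ i)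
      have hcine : (c i : ℝ) ≠ 0 := Nat.cast_ne_zero.mpr (Nat.pos_iff_ne_zero.mp hci)
      have : ⟪v (RS.simpleRoot i), q⟫ = 0 := by
        rcases mul_eq_zero.mp hiz with h | h
        · exact absurd h hcine
        · exact h
      rcases hterm i with h | ⟨-, h⟩
      · rw [this] at h; exact absurd h (lt_irrefl 0)
      · exact mul_nonneg (Nat.cast_nonneg _) (RS.coord_nonneg_of_pos h j)

lemma dominant_symm_maps {v : V ≃ₗ[ℝ] V} {r : V} (hd : RS.IsDominantPair v r)
    {β : V} (hβ : β ∈ RS.Sset (v r)) : v.symm β ∈ RS.pos := by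
  have h1 : v.symm β ∈ RS.Δ := RS.weyl_symm_maps_root hd.1 hβ.1
  rcases RS.mem_Δ_dichotomy h1 with h | ⟨h, -⟩
  · exact h
  · exfalso
    have h2 : v (-(v.symm β)) = -β := by rw [map_neg, v.apply_symm_apply]
    have h3 : -β ∈ RS.Sset (v r) := h2 ▸ RS.dominant_maps_pos hd h
    exact RS.neg_not_mem_Sset hβ h3

lemma dominant_inj {v v' : V ≃ₗ[ℝ] V} {r r' : V} (hd : RS.IsDominantPair v r)
    (hd' : RS.IsDominantPair v' r') (heq : v r = v' r') : v = v' ∧ r = r' := by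
  have hu : ∀ α ∈ RS.pos, (v'⁻¹ * v) α ∈ RS.pos := by
    intro α hα
    have h1 : v α ∈ RS.Sset (v' r') := heq ▸ RS.dominant_maps_pos hd hα
    exact RS.dominant_symm_maps hd' h1
  have huW : v'⁻¹ * v ∈ RS.weylGroup := mul_mem (inv_mem hd'.1) hd.1
  have h1 : v'⁻¹ * v = 1 := RS.eq_one_of_fix_pos huW hu
  have hvv : v = v' := by
    have := congrArg (fun w => v' * w) h1
    simpa [mul_assoc] using this
  refine ⟨hvv, ?_⟩
  apply v.injective
  rw [heq, hvv]

lemma exists_dominant {q : V} (hq : q ∈ RS.corootLattice) :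
    ∃ (v : V ≃ₗ[ℝ] V) (r : V), RS.IsDominantPair v r ∧ v r = q := by
  classical
  set N := RS.pos.ncard with hN
  set F : (V ≃ₗ[ℝ] V) → ℕ := fun w =>
    (N + 1) * {α ∈ RS.pos | 0 < ⟪w α, q⟫}.ncard + {α ∈ RS.pos | -(w α) ∈ RS.pos}.ncard
    with hF
  have hSne : {n : ℕ | ∃ w ∈ RS.weylGroup, F w = n}.Nonempty := ⟨F 1, 1, one_mem _, rfl⟩
  obtain ⟨v, hvW, hvF⟩ := Nat.sInf_mem hSne
  have hmin : ∀ w ∈ RS.weylGroup, F v ≤ F w := fun w hw => by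
    rw [hvF]; exact Nat.sInf_le ⟨w, hw, rfl⟩
  have hdom : ∀ i, ⟪v (RS.simpleRoot i), q⟫ < 0
      ∨ (⟪v (RS.simpleRoot i), q⟫ = 0 ∧ v (RS.simpleRoot i) ∈ RS.pos) := by
    intro i
    by_contra hcon
    push_neg at hcon
    obtain ⟨hc1, hc2⟩ := hcon
    set w := v * sRefl (RS.simpleRoot i) with hw
    have hwW : w ∈ RS.weylGroup :=
      mul_mem hvW (RS.sRefl_mem_weyl (RS.simpleRoot_mem i))
    have hFw := hmin w hwW
    have hn2le : {α ∈ RS.pos | -(w α) ∈ RS.pos}.ncard ≤ N :=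
      Set.ncard_le_ncard (fun x hx => hx.1) RS.pos_finite
    rcases lt_or_eq_of_le hc1 with hpos | hzero
    · -- case 0 < ⟪vΠi, q⟫
      have h1 : {α ∈ RS.pos | 0 < ⟪w α, q⟫}.ncard + 1
          = {α ∈ RS.pos | 0 < ⟪v α, q⟫}.ncard := by
        have he : {α ∈ RS.pos | 0 < ⟪w α, q⟫}
            = {α ∈ RS.pos | 0 < ⟪v (sRefl (RS.simpleRoot i) α), q⟫} := rfl
        rw [he]
        exact RS.count_move_pos (fun β => 0 < ⟪β, q⟫) v i
          (by intro h; rw [inner_neg_left] at h; linarith) hpos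
      have harith : F w < F v := by
        rw [hF]
        simp only
        set a := {α ∈ RS.pos | 0 < ⟪w α, q⟫}.ncard
        set b := {α ∈ RS.pos | 0 < ⟪v α, q⟫}.ncard
        calc (N+1) * a + {α ∈ RS.pos | -(w α) ∈ RS.pos}.ncard
            ≤ (N+1) * a + N := by omega
          _ < (N+1) * (a+1) := by ring_nf; omega
          _ = (N+1) * b := by rw [h1]
          _ ≤ (N+1) * b + {α ∈ RS.pos | -(v α) ∈ RS.pos}.ncard := Nat.le_add_right _ _
      exact absurd hFw (not_le.mpr harith)
    · -- case ⟪vΠi, q⟫ = 0 and v Πi ∉ pos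
      have hzero' : ⟪v (RS.simpleRoot i), q⟫ = 0 := hzero.symm
      have hnp : v (RS.simpleRoot i) ∉ RS.pos := hc2 hzero'
      have hvΔ : v (RS.simpleRoot i) ∈ RS.Δ :=
        RS.weyl_maps_root' hvW (RS.simpleRoot_mem i)
      have hneg : -(v (RS.simpleRoot i)) ∈ RS.pos := by
        rcases RS.mem_Δ_dichotomy hvΔ with h | ⟨h, -⟩
        · exact absurd h hnp
        · exact h
      have h1 : {α ∈ RS.pos | 0 < ⟪w α, q⟫}.ncard
          = {α ∈ RS.pos | 0 < ⟪v α, q⟫}.ncard := by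
        have he : {α ∈ RS.pos | 0 < ⟪w α, q⟫}
            = {α ∈ RS.pos | 0 < ⟪v (sRefl (RS.simpleRoot i) α), q⟫} := rfl
        rw [he]
        exact RS.count_move_eq (fun β => 0 < ⟪β, q⟫) v i
          (by intro h; rw [inner_neg_left, hzero', neg_zero] at h; exact lt_irrefl 0 h)
          (by intro h; rw [hzero'] at h; exact lt_irrefl 0 h)
      have h2 : {α ∈ RS.pos | -(w α) ∈ RS.pos}.ncard + 1
          = {α ∈ RS.pos | -(v α) ∈ RS.pos}.ncard := by
        have he : {α ∈ RS.pos | -(w α) ∈ RS.pos}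
            = {α ∈ RS.pos | -(v (sRefl (RS.simpleRoot i) α)) ∈ RS.pos} := rfl
        rw [he]
        exact RS.count_move_pos (fun β => -β ∈ RS.pos) v i
          (by intro h; rw [neg_neg] at h; exact hnp h) hneg
      have harith : F w < F v := by
        rw [hF]
        simp only
        rw [h1]
        omega
      exact absurd hFw (not_le.mpr harith)
  refine ⟨v, v.symm q, ⟨hvW, ?_, ?_⟩, v.apply_symm_apply q⟩
  · have := RS.weyl_maps_corootLattice (inv_mem hvW) hq
    exact this
  · intro i
    have hvΔ : v (RS.simpleRoot i) ∈ RS.Δ :=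
      RS.weyl_maps_root' hvW (RS.simpleRoot_mem i)
    have hinner : ⟪RS.simpleRoot i, v.symm q⟫ = ⟪v (RS.simpleRoot i), q⟫ := by
      conv_rhs => rw [← v.apply_symm_apply q]
      exact (RS.weyl_inner hvW _ _).symm
    refine ⟨hvΔ, ?_⟩
    rcases hdom i with h | ⟨h, h'⟩
    · left
      show (0:ℝ) < 0 - ⟪RS.simpleRoot i, v.symm q⟫
      rw [hinner]; linarith
    · right
      constructor
      · show (0:ℝ) - ⟪RS.simpleRoot i, v.symm q⟫ = 0
        rw [hinner, h, sub_zero]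
      · exact h'

end RootSystemData

namespace RootSystemData

variable {p : ℕ} (RS : RootSystemData V p)

lemma inner_symm_eq {v : V ≃ₗ[ℝ] V} (hvW : v ∈ RS.weylGroup) (x r : V) :
    ⟪v.symm x, r⟫ = ⟪x, v r⟫ := by
  conv_rhs => rw [← v.apply_symm_apply x]
  exact (RS.weyl_inner hvW _ _).symm

lemma sMaximal_iff (v : V ≃ₗ[ℝ] V) (r : V) :
    RS.IsSMaximalPair v r ↔ RS.IsDominantPair v r ∧
      v r ∈ {x : V | (∀ i, RS.IsShort (RS.simpleRoot i) → ⟪x, RS.simpleRoot i⟫ ≤ 1) ∧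
          (∀ i, ¬ RS.IsShort (RS.simpleRoot i) → ⟪x, RS.simpleRoot i⟫ ≤ 0) ∧
          1 ≤ ⟪x, RS.θ⟫} ∩ (RS.corootLattice : Set V) := by
  constructor
  · rintro ⟨hd, h1, h2, h3⟩
    have hvW := hd.1
    refine ⟨hd, ⟨⟨?_, ?_, ?_⟩, ?_⟩⟩
    · intro i hs
      have h' : (0:ℝ) + ⟪v.symm (RS.simpleRoot i), r⟫ ≤ 1 := h1 i hs
      rw [zero_add, RS.inner_symm_eq hvW] at h'
      rw [real_inner_comm]
      exact h'
    · intro i hs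
      have h' : (0:ℝ) + ⟪v.symm (RS.simpleRoot i), r⟫ ≤ 0 := h2 i hs
      rw [zero_add, RS.inner_symm_eq hvW] at h'
      rw [real_inner_comm]
      exact h'
    · have h' : (1:ℝ) + ⟪v.symm (-RS.θ), r⟫ ≤ 0 := h3
      rw [map_neg, inner_neg_left, RS.inner_symm_eq hvW] at h'
      rw [real_inner_comm]
      linarith
    · exact RS.weyl_maps_corootLattice hvW hd.2.1
  · rintro ⟨hd, ⟨⟨hs, hl, hθ⟩, -⟩⟩
    have hvW := hd.1
    refine ⟨hd, ?_, ?_, ?_⟩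
    · intro i hshort
      show (0:ℝ) + ⟪v.symm (RS.simpleRoot i), r⟫ ≤ 1
      rw [zero_add, RS.inner_symm_eq hvW, real_inner_comm]
      exact hs i hshort
    · intro i hlong
      show (0:ℝ) + ⟪v.symm (RS.simpleRoot i), r⟫ ≤ 0
      rw [zero_add, RS.inner_symm_eq hvW, real_inner_comm]
      exact hl i hlong
    · show (1:ℝ) + ⟪v.symm (-RS.θ), r⟫ ≤ 0
      rw [map_neg, inner_neg_left, RS.inner_symm_eq hvW, real_inner_comm]
      have := hθ
      linarith [hθ]

end RootSystemData

/-- Let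
`D^(s)_max = {x : (x,α) ≤ 1 for α ∈ Π_s, (x,α) ≤ 0 for α ∈ Π_l, (x,θ) ≥ 1}`. Then:
(1) `w = v·t_r ∈ Ŵ` is `s`-maximal iff `w` is dominant and `v(r) ∈ D^(s)_max ∩ Q∨`;
(2) the map `Ŵ^(s)_max → D^(s)_max ∩ Q∨` sending `w = v·t_r` to `v(r)` is a bijection. -/
theorem statement13 {V : Type*} [NormedAddCommGroup V] [InnerProductSpace ℝ V] {p : ℕ}
    (RS : RootSystemData V p) (htwo : RS.TwoLengths) :
    (∀ (v : V ≃ₗ[ℝ] V) (r : V),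
      RS.IsSMaximalPair v r ↔ RS.IsDominantPair v r ∧
        v r ∈ {x : V | (∀ i, RS.IsShort (RS.simpleRoot i) → ⟪x, RS.simpleRoot i⟫ ≤ 1) ∧
            (∀ i, ¬ RS.IsShort (RS.simpleRoot i) → ⟪x, RS.simpleRoot i⟫ ≤ 0) ∧
            1 ≤ ⟪x, RS.θ⟫} ∩ (RS.corootLattice : Set V)) ∧
    Set.BijOn (fun vr : (V ≃ₗ[ℝ] V) × V => vr.1 vr.2)
      {vr : (V ≃ₗ[ℝ] V) × V | RS.IsSMaximalPair vr.1 vr.2}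
      ({x : V | (∀ i, RS.IsShort (RS.simpleRoot i) → ⟪x, RS.simpleRoot i⟫ ≤ 1) ∧
          (∀ i, ¬ RS.IsShort (RS.simpleRoot i) → ⟪x, RS.simpleRoot i⟫ ≤ 0) ∧
          1 ≤ ⟪x, RS.θ⟫} ∩ (RS.corootLattice : Set V)) := by
  refine ⟨fun v r => RS.sMaximal_iff v r, ?_, ?_, ?_⟩
  · intro vr hvr
    exact ((RS.sMaximal_iff vr.1 vr.2).mp hvr).2
  · intro a ha b hb heq
    have h := RS.dominant_inj ha.1 hb.1 heq
    exact Prod.ext h.1 h.2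
  · intro x hx
    obtain ⟨v, r, hd, hvr⟩ := RS.exists_dominant hx.2
    exact ⟨(v, r), (RS.sMaximal_iff v r).mpr ⟨hd, by rw [hvr]; exact hx⟩, hvr⟩
end
end
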